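/- arXiv:1408.4419 — 8 statements merged into one kernel-verified Lean document; each statement's English description precedes it below -/
import Mathlib

section
/- Let ρ > 0, let (η_j) be a summable sequence of nonnegative reals, and let (U_j) be bounded self-adjoint operators on H with U_j ⪰ ρI and (1+η_k)U_k ⪰ U_{k+1} for all k. Let (T_k) be maps H → H, each α_k-averaged in ‖·‖_{U_k} with α_k ∈ (0,1), let λ_k ∈ (0, 1/α_k], and suppose z* is a common fixed point of all T_k. Define z^{k+1} = (1−λ_k)z^k + λ_k T_k z^k. Then for all k, ‖z^{k+1} − z*‖²_{U_{k+1}} ≤ (1+η_k)‖z^k − z*‖²_{U_k}, and hence ‖z^k − z*‖²_{U_k} ≤ η_p ‖z^0 − z*‖²_{U_0} where η_p = ∏_{i=0}^∞(1+η_i). -/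
open RealInnerProductSpace

private lemma multipliable_one_add_of_summable' (η : ℕ → ℝ) (hηpos : ∀ n, 0 ≤ η n)
    (hηsum : Summable η) : ∃ a : ℝ, HasProd (fun i => (1 : ℝ) + η i) a ∧
      ∀ s : Finset ℕ, ∏ i ∈ s, (1 + η i) ≤ a := by
  have h1 : ∀ i, (1 : ℝ) ≤ 1 + η i := fun i => by linarith [hηpos i]
  have hbdd : ∀ s : Finset ℕ, ∏ i ∈ s, (1 + η i) ≤ Real.exp (∑' i, η i) := by
    intro s
    calc ∏ i ∈ s, (1 + η i) ≤ ∏ i ∈ s, Real.exp (η i) := by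
          apply Finset.prod_le_prod (fun i _ => by linarith [hηpos i])
          intro i _
          linarith [Real.add_one_le_exp (η i)]
      _ = Real.exp (∑ i ∈ s, η i) := by rw [Real.exp_sum]
      _ ≤ Real.exp (∑' i, η i) := by
          apply Real.exp_le_exp.2
          exact Summable.sum_le_tsum s (fun i _ => hηpos i) hηsum
  set S : Set ℝ := Set.range (fun s : Finset ℕ => ∏ i ∈ s, (1 + η i)) with hS
  have hne : S.Nonempty := ⟨_, ⟨∅, rfl⟩⟩
  have hba : BddAbove S := ⟨Real.exp (∑' i, η i), by rintro x ⟨s, rfl⟩; exact hbdd s⟩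
  have hmono : Monotone (fun s : Finset ℕ => ∏ i ∈ s, (1 + η i)) := by
    intro s t hst
    have hps : (0:ℝ) < ∏ i ∈ s, (1 + η i) :=
      Finset.prod_pos (fun i _ => by linarith [hηpos i])
    have hone : (1:ℝ) ≤ ∏ i ∈ t \ s, (1 + η i) := by
      have := Finset.prod_le_prod (f := fun _ : ℕ => (1:ℝ)) (g := fun i => 1 + η i)
        (s := t \ s) (fun i _ => zero_le_one) (fun i _ => h1 i)
      simpa using this
    calc ∏ i ∈ s, (1 + η i) = 1 * ∏ i ∈ s, (1 + η i) := by ring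
      _ ≤ (∏ i ∈ t \ s, (1 + η i)) * ∏ i ∈ s, (1 + η i) :=
          mul_le_mul_of_nonneg_right hone hps.le
      _ = ∏ i ∈ t, (1 + η i) := Finset.prod_sdiff hst
  exact ⟨sSup S, tendsto_atTop_isLUB hmono (isLUB_csSup hne hba),
    fun s => le_csSup hba ⟨s, rfl⟩⟩

/-- Variable metric KM iteration: quasi-Fejér monotonicity in the changing metrics, and
the resulting uniform bound `‖z^k - z*‖²_{U_k} ≤ η_p ‖z^0 - z*‖²_{U_0}`. -/
theorem variable_metric_KM_fejer {H : Type*} [NormedAddCommGroup H] [InnerProductSpace ℝ H]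
    [CompleteSpace H] (ρ : ℝ) (hρ : 0 < ρ)
    (η : ℕ → ℝ) (hηpos : ∀ n, 0 ≤ η n) (hηsum : Summable η)
    (U : ℕ → H →L[ℝ] H) (hUsa : ∀ k, IsSelfAdjoint (U k))
    (hUρ : ∀ k (x : H), ρ * ‖x‖ ^ 2 ≤ ⟪U k x, x⟫)
    (hUdec : ∀ k (x : H), ⟪U (k + 1) x, x⟫ ≤ (1 + η k) * ⟪U k x, x⟫)
    (α : ℕ → ℝ) (hα : ∀ k, α k ∈ Set.Ioo (0 : ℝ) 1)
    (lam : ℕ → ℝ) (hlam : ∀ k, lam k ∈ Set.Ioc (0 : ℝ) (1 / α k))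
    (T : ℕ → H → H)
    (hTavg : ∀ k, ∃ N : H → H,
        (∀ x y : H, ⟪U k (N x - N y), N x - N y⟫ ≤ ⟪U k (x - y), x - y⟫) ∧
        ∀ x : H, T k x = (1 - α k) • x + α k • N x)
    (zs : H) (hfix : ∀ k, T k zs = zs)
    (z : ℕ → H) (hrec : ∀ k, z (k + 1) = (1 - lam k) • z k + lam k • T k (z k)) :
    (∀ k, ⟪U (k + 1) (z (k + 1) - zs), z (k + 1) - zs⟫ ≤
        (1 + η k) * ⟪U k (z k - zs), z k - zs⟫) ∧
    (∀ k, ⟪U k (z k - zs), z k - zs⟫ ≤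
        (∏' i, (1 + η i)) * ⟪U 0 (z 0 - zs), z 0 - zs⟫) := by
  -- nonnegativity of the quadratic forms
  have hQnn : ∀ k (x : H), (0:ℝ) ≤ ⟪U k x, x⟫ := by
    intro k x
    have := hUρ k x
    nlinarith [sq_nonneg ‖x‖]
  -- key monotonicity step in the fixed metric U k
  have hstep : ∀ k, ⟪U k (z (k + 1) - zs), z (k + 1) - zs⟫ ≤ ⟪U k (z k - zs), z k - zs⟫ := by
    intro k
    obtain ⟨N, hN, hT⟩ := hTavg k
    obtain ⟨hα0, hα1⟩ := hα k
    obtain ⟨hl0, hl1⟩ := hlam k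
    -- N fixes zs
    have hNzs : N zs = zs := by
      have h := hfix k
      rw [hT zs] at h
      have h4 : α k • N zs = zs - (1 - α k) • zs := eq_sub_of_add_eq' h
      have h5 : zs - (1 - α k) • zs = α k • zs := by rw [sub_smul, one_smul]; abel
      exact smul_right_injective H (ne_of_gt hα0) (h4.trans h5)
    set t : ℝ := lam k * α k with ht
    have ht0 : 0 < t := mul_pos hl0 hα0
    have ht1 : t ≤ 1 := by
      rw [ht]
      rw [le_div_iff₀ hα0] at hl1
      linarith
    set a : H := z k - zs with ha
    set b : H := N (z k) - zs with hb
    -- z (k+1) - zs = (1-t) • a + t • b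
    have hz : z (k + 1) - zs = (1 - t) • a + t • b := by
      rw [hrec k, hT (z k), ha, hb, ht]
      simp only [smul_add, smul_smul, sub_smul, smul_sub, one_smul]
      abel
    -- symmetry of U k
    have hsym : ∀ x y : H, ⟪U k x, y⟫ = ⟪U k y, x⟫ := by
      intro x y
      have h := ((ContinuousLinearMap.isSelfAdjoint_iff_isSymmetric).1 (hUsa k)) x y
      exact h.trans (real_inner_comm ((U k) y) x)
    -- expand the quadratic form
    have hexp : ⟪U k ((1 - t) • a + t • b), (1 - t) • a + t • b⟫
        = (1 - t)^2 * ⟪U k a, a⟫ + 2 * (t * (1 - t)) * ⟪U k a, b⟫ + t^2 * ⟪U k b, b⟫ := by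
      simp only [map_add, map_smul, inner_add_left, inner_add_right,
        real_inner_smul_left, real_inner_smul_right]
      rw [hsym b a]
      ring
    have hdiff : ⟪U k (a - b), a - b⟫
        = ⟪U k a, a⟫ - 2 * ⟪U k a, b⟫ + ⟪U k b, b⟫ := by
      simp only [map_sub, inner_sub_left, inner_sub_right]
      rw [hsym b a]
      ring
    have hbb : ⟪U k b, b⟫ ≤ ⟪U k a, a⟫ := by
      have := hN (z k) zs
      rw [hNzs] at this
      simpa [ha, hb] using this
    have hab : (0:ℝ) ≤ ⟪U k (a - b), a - b⟫ := hQnn k _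
    rw [hz, hexp]
    nlinarith [mul_nonneg (mul_nonneg ht0.le (by linarith : (0:ℝ) ≤ 1 - t)) hab,
      mul_nonneg ht0.le (by linarith : (0:ℝ) ≤ ⟪U k a, a⟫ - ⟪U k b, b⟫)]
  have part1 : ∀ k, ⟪U (k + 1) (z (k + 1) - zs), z (k + 1) - zs⟫ ≤
      (1 + η k) * ⟪U k (z k - zs), z k - zs⟫ := by
    intro k
    calc ⟪U (k + 1) (z (k + 1) - zs), z (k + 1) - zs⟫
        ≤ (1 + η k) * ⟪U k (z (k + 1) - zs), z (k + 1) - zs⟫ := hUdec k _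
      _ ≤ (1 + η k) * ⟪U k (z k - zs), z k - zs⟫ := by
          apply mul_le_mul_of_nonneg_left (hstep k)
          linarith [hηpos k]
  refine ⟨part1, ?_⟩
  obtain ⟨ap, hap, hble⟩ := multipliable_one_add_of_summable' η hηpos hηsum
  have htp : (∏' i, (1 + η i)) = ap := hap.tprod_eq
  have h1 : ∀ i, (1:ℝ) ≤ 1 + η i := fun i => by linarith [hηpos i]
  intro k
  have hfin : ⟪U k (z k - zs), z k - zs⟫
      ≤ (∏ i ∈ Finset.range k, (1 + η i)) * ⟪U 0 (z 0 - zs), z 0 - zs⟫ := by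
    induction k with
    | zero => simp
    | succ n ih =>
      calc ⟪U (n + 1) (z (n + 1) - zs), z (n + 1) - zs⟫
          ≤ (1 + η n) * ⟪U n (z n - zs), z n - zs⟫ := part1 n
        _ ≤ (1 + η n) * ((∏ i ∈ Finset.range n, (1 + η i)) * ⟪U 0 (z 0 - zs), z 0 - zs⟫) := by
            apply mul_le_mul_of_nonneg_left ih; linarith [hηpos n]
        _ = (∏ i ∈ Finset.range (n + 1), (1 + η i)) * ⟪U 0 (z 0 - zs), z 0 - zs⟫ := by
            rw [Finset.prod_range_succ]; ring
  refine hfin.trans (mul_le_mul_of_nonneg_right ?_ (hQnn 0 _))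
  rw [htp]
  exact hble (Finset.range k)
end

section
/- Under the hypotheses of the variable-metric KM iteration (z^{k+1} = (1−λ_k)z^k + λ_k T_k z^k with T_k α_k-averaged in ‖·‖_{U_k}, (1+η_k)U_k ⪰ U_{k+1}, U_k ⪰ ρI, common fixed point z*), the sum ∑_{i=0}^∞ ((1−α_iλ_i)/(α_iλ_i)) ‖z^{i+1} − z^i‖² is bounded by (1/ρ)(1 + η_p η_s)‖z^0 − z*‖²_{U_0}, where η_p = ∏(1+η_i) and η_s = ∑ η_i. -/
open RealInnerProductSpace

private lemma quad_expand {H : Type*} [NormedAddCommGroup H] [InnerProductSpace ℝ H]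
    (U : H →L[ℝ] H) (hU : ∀ x y : H, ⟪U x, y⟫ = ⟪x, U y⟫) (a b : H) (μ : ℝ) :
    ⟪U ((1 - μ) • a + μ • b), (1 - μ) • a + μ • b⟫ =
      (1 - μ) * ⟪U a, a⟫ + μ * ⟪U b, b⟫ - μ * (1 - μ) * ⟪U (a - b), a - b⟫ := by
  have hba : ⟪U b, a⟫ = ⟪U a, b⟫ := by rw [hU b a, real_inner_comm]
  simp only [map_add, map_smul, map_sub, inner_add_left, inner_add_right,
    inner_sub_left, inner_sub_right, real_inner_smul_left, real_inner_smul_right, hba]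
  ring

private lemma quad_smul {H : Type*} [NormedAddCommGroup H] [InnerProductSpace ℝ H]
    (U : H →L[ℝ] H) (μ : ℝ) (v : H) :
    ⟪U (μ • v), μ • v⟫ = μ ^ 2 * ⟪U v, v⟫ := by
  simp only [map_smul, real_inner_smul_left, real_inner_smul_right]
  ring

/-- Variable metric KM iteration: the weighted sum of successive-iterate distances
`∑ ((1-α_iλ_i)/(α_iλ_i)) ‖z^{i+1} - z^i‖²` is bounded by
`(1/ρ)(1 + η_p η_s)‖z^0 - z*‖²_{U_0}` (stated via partial sums). -/
theorem variable_metric_KM_FPR_sum {H : Type*} [NormedAddCommGroup H] [InnerProductSpace ℝ H]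
    [CompleteSpace H] (ρ : ℝ) (hρ : 0 < ρ)
    (η : ℕ → ℝ) (hηpos : ∀ n, 0 ≤ η n) (hηsum : Summable η)
    (U : ℕ → H →L[ℝ] H) (hUsa : ∀ k, IsSelfAdjoint (U k))
    (hUρ : ∀ k (x : H), ρ * ‖x‖ ^ 2 ≤ ⟪U k x, x⟫)
    (hUdec : ∀ k (x : H), ⟪U (k + 1) x, x⟫ ≤ (1 + η k) * ⟪U k x, x⟫)
    (α : ℕ → ℝ) (hα : ∀ k, α k ∈ Set.Ioo (0 : ℝ) 1)
    (lam : ℕ → ℝ) (hlam : ∀ k, lam k ∈ Set.Ioc (0 : ℝ) (1 / α k))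
    (T : ℕ → H → H)
    (hTavg : ∀ k, ∃ N : H → H,
        (∀ x y : H, ⟪U k (N x - N y), N x - N y⟫ ≤ ⟪U k (x - y), x - y⟫) ∧
        ∀ x : H, T k x = (1 - α k) • x + α k • N x)
    (zs : H) (hfix : ∀ k, T k zs = zs)
    (z : ℕ → H) (hrec : ∀ k, z (k + 1) = (1 - lam k) • z k + lam k • T k (z k)) :
    ∀ n : ℕ,
      ∑ i ∈ Finset.range n,
          ((1 - α i * lam i) / (α i * lam i)) * ‖z (i + 1) - z i‖ ^ 2 ≤
        (1 / ρ) * (1 + (∏' i, (1 + η i)) * (∑' i, η i)) *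
          ⟪U 0 (z 0 - zs), z 0 - zs⟫ := by
  -- basic positivity facts
  have hμpos : ∀ k, 0 < α k * lam k := fun k =>
    mul_pos (hα k).1 (hlam k).1
  have hμle : ∀ k, α k * lam k ≤ 1 := by
    intro k
    have h1 : lam k ≤ 1 / α k := (hlam k).2
    have h2 : 0 < α k := (hα k).1
    calc α k * lam k ≤ α k * (1 / α k) := by nlinarith
    _ = 1 := by field_simp
  have hQnonneg : ∀ k (x : H), (0 : ℝ) ≤ ⟪U k x, x⟫ := fun k x =>
    le_trans (by positivity) (hUρ k x)
  have hsym : ∀ k (x y : H), ⟪U k x, y⟫ = ⟪x, U k y⟫ := fun k =>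
    ((hUsa k).isSymmetric)
  -- abbreviations
  set V : ℕ → ℝ := fun n => ⟪U n (z n - zs), z n - zs⟫ with hVdef
  set P : ℕ → ℝ := fun n => ∏ i ∈ Finset.range n, (1 + η i) with hPdef
  set ηp : ℝ := ∏' i, (1 + η i) with hηpdef
  set ηs : ℝ := ∑' i, η i with hηsdef
  have hVnonneg : ∀ n, 0 ≤ V n := fun n => hQnonneg n _
  -- multipliability of (1 + η i)
  have hmult : Multipliable (fun i => (1 : ℝ) + η i) := by
    have hpos : ∀ (x : Unit) (n : ℕ), 0 < (fun n (_ : Unit) => (1 : ℝ) + η n) n x := by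
      intro _ n; have := hηpos n; dsimp; linarith
    have hlog : ∀ (x : Unit), Summable fun n => Real.log ((1 : ℝ) + η n) := by
      intro _
      apply Summable.of_nonneg_of_le (fun n => Real.log_nonneg (by linarith [hηpos n]))
        (fun n => ?_) hηsum
      have h := Real.log_le_sub_one_of_pos (x := 1 + η n) (by linarith [hηpos n])
      linarith
    exact Real.multipliable_of_summable_log (fun n => hpos () n) (hlog ())
  have hPmono : Monotone P := by
    apply monotone_nat_of_le_succ
    intro n
    have hP0 : 0 ≤ P n := Finset.prod_nonneg fun i _ => by linarith [hηpos i]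
    have : P (n + 1) = P n * (1 + η n) := by
      simp [hPdef, Finset.prod_range_succ]
    rw [this]
    nlinarith [hηpos n]
  have hPle : ∀ n, P n ≤ ηp := by
    have htend := hmult.hasProd.tendsto_prod_nat
    exact fun n => hPmono.ge_of_tendsto htend n
  have hP0 : P 0 = 1 := by simp [hPdef]
  have hηp1 : (1 : ℝ) ≤ ηp := hP0 ▸ hPle 0
  -- per-step estimates
  have step : ∀ k,
      ((1 - α k * lam k) / (α k * lam k)) * ‖z (k + 1) - z k‖ ^ 2 * ρ
          + ⟪U k (z (k + 1) - zs), z (k + 1) - zs⟫ ≤ V k ∧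
      V (k + 1) ≤ (1 + η k) * ⟪U k (z (k + 1) - zs), z (k + 1) - zs⟫ := by
    intro k
    obtain ⟨N, hN, hT⟩ := hTavg k
    set μ := α k * lam k with hμdef
    have hμ0 : 0 < μ := hμpos k
    have hμ1 : μ ≤ 1 := hμle k
    -- N fixes zs
    have hNfix : N zs = zs := by
      have h := hfix k
      rw [hT zs] at h
      have h2 : α k • N zs = α k • zs := by
        calc α k • N zs = (1 - α k) • zs + α k • N zs - (1 - α k) • zs := by abel
          _ = zs - (1 - α k) • zs := by rw [h]
          _ = α k • zs := by rw [sub_smul, one_smul]; abel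
      exact smul_right_injective H (ne_of_gt (hα k).1) h2
    set a := z k - zs with hadef
    set b := N (z k) - zs with hbdef
    have hz1 : z (k + 1) - zs = (1 - μ) • a + μ • b := by
      rw [hrec k, hT (z k), hadef, hbdef, hμdef]
      module
    have hz2 : z (k + 1) - z k = μ • (b - a) := by
      rw [hrec k, hT (z k), hbdef, hadef, hμdef]
      module
    have hiden := quad_expand (U k) (hsym k) a b μ
    rw [← hz1] at hiden
    have hnonexp : ⟪U k b, b⟫ ≤ ⟪U k a, a⟫ := by
      have := hN (z k) zs
      rwa [hNfix] at this
    have hqd : ⟪U k (z (k + 1) - z k), z (k + 1) - z k⟫ = μ ^ 2 * ⟪U k (a - b), a - b⟫ := by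
      rw [hz2, quad_smul]
      congr 1
      rw [show (b - a : H) = -(a - b) from by abel, map_neg, inner_neg_neg]
    have hd_lb : ρ * ‖z (k + 1) - z k‖ ^ 2 ≤ μ ^ 2 * ⟪U k (a - b), a - b⟫ := by
      rw [← hqd]; exact hUρ k _
    have hab_nonneg : 0 ≤ ⟪U k (a - b), a - b⟫ := hQnonneg k _
    constructor
    · -- main descent inequality
      have hc : ((1 - μ) / μ) * ‖z (k + 1) - z k‖ ^ 2 * ρ ≤ μ * (1 - μ) * ⟪U k (a - b), a - b⟫ := by
        have hcnn : 0 ≤ (1 - μ) / μ := div_nonneg (by linarith) (le_of_lt hμ0)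
        have h1 : ((1 - μ) / μ) * (ρ * ‖z (k + 1) - z k‖ ^ 2)
            ≤ ((1 - μ) / μ) * (μ ^ 2 * ⟪U k (a - b), a - b⟫) :=
          mul_le_mul_of_nonneg_left hd_lb hcnn
        have h2 : ((1 - μ) / μ) * (μ ^ 2 * ⟪U k (a - b), a - b⟫)
            = μ * (1 - μ) * ⟪U k (a - b), a - b⟫ := by
          field_simp
        calc ((1 - μ) / μ) * ‖z (k + 1) - z k‖ ^ 2 * ρ
            = ((1 - μ) / μ) * (ρ * ‖z (k + 1) - z k‖ ^ 2) := by ring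
          _ ≤ μ * (1 - μ) * ⟪U k (a - b), a - b⟫ := h2 ▸ h1
      have hV : V k = ⟪U k a, a⟫ := rfl
      rw [hV]
      nlinarith [hiden, hnonexp, hc]
    · exact hUdec k (z (k + 1) - zs)
  -- inductive invariant
  have main : ∀ n,
      ρ * (∑ i ∈ Finset.range n,
          ((1 - α i * lam i) / (α i * lam i)) * ‖z (i + 1) - z i‖ ^ 2) + V n
        ≤ V 0 + ηp * V 0 * ∑ i ∈ Finset.range n, η i ∧ V n ≤ P n * V 0 := by
    intro n
    induction n with
    | zero => simp [hP0]
    | succ n ih =>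
      obtain ⟨ih1, ih2⟩ := ih
      obtain ⟨s1, s2⟩ := step n
      set Q' := ⟪U n (z (n + 1) - zs), z (n + 1) - zs⟫ with hQ'def
      have hQ'nonneg : 0 ≤ Q' := hQnonneg n _
      have hcnn : 0 ≤ ((1 - α n * lam n) / (α n * lam n)) * ‖z (n + 1) - z n‖ ^ 2 := by
        apply mul_nonneg
        · exact div_nonneg (by linarith [hμle n]) (le_of_lt (hμpos n))
        · positivity
      have hQ'leV : Q' ≤ V n := by nlinarith [s1]
      have hVleηp : V n ≤ ηp * V 0 := by
        calc V n ≤ P n * V 0 := ih2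
          _ ≤ ηp * V 0 := mul_le_mul_of_nonneg_right (hPle n) (hVnonneg 0)
      constructor
      · rw [Finset.sum_range_succ, Finset.sum_range_succ]
        have key : ρ * (((1 - α n * lam n) / (α n * lam n)) * ‖z (n + 1) - z n‖ ^ 2)
            + V (n + 1) ≤ V n + η n * Q' := by nlinarith [s1, s2]
        have hQ'bound : η n * Q' ≤ η n * (ηp * V 0) :=
          mul_le_mul_of_nonneg_left (le_trans hQ'leV hVleηp) (hηpos n)
        nlinarith [ih1]
      · have : V (n + 1) ≤ (1 + η n) * V n :=
          le_trans s2 (mul_le_mul_of_nonneg_left hQ'leV (by linarith [hηpos n]))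
        calc V (n + 1) ≤ (1 + η n) * V n := this
          _ ≤ (1 + η n) * (P n * V 0) :=
            mul_le_mul_of_nonneg_left ih2 (by linarith [hηpos n])
          _ = P (n + 1) * V 0 := by
            simp [hPdef, Finset.prod_range_succ]; ring
  -- conclude
  intro n
  obtain ⟨h1, _⟩ := main n
  have hsumle : ∑ i ∈ Finset.range n, η i ≤ ηs :=
    Summable.sum_le_tsum (Finset.range n) (fun i _ => hηpos i) hηsum
  have hηpV0 : 0 ≤ ηp * V 0 := mul_nonneg (by linarith) (hVnonneg 0)
  have hρS : ρ * (∑ i ∈ Finset.range n,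
      ((1 - α i * lam i) / (α i * lam i)) * ‖z (i + 1) - z i‖ ^ 2)
      ≤ (1 + ηp * ηs) * V 0 := by
    have h2 : ηp * V 0 * ∑ i ∈ Finset.range n, η i ≤ ηp * V 0 * ηs :=
      mul_le_mul_of_nonneg_left hsumle hηpV0
    nlinarith [hVnonneg n]
  have hfin : (∑ i ∈ Finset.range n,
      ((1 - α i * lam i) / (α i * lam i)) * ‖z (i + 1) - z i‖ ^ 2)
      ≤ (1 / ρ) * ((1 + ηp * ηs) * V 0) := by
    rw [one_div, inv_mul_eq_div, le_div_iff₀ hρ]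
    nlinarith [hρS]
  calc _ ≤ (1 / ρ) * ((1 + ηp * ηs) * V 0) := hfin
    _ = (1 / ρ) * (1 + ηp * ηs) * V 0 := by ring
end

section
/- Define the pre-primal-dual gap G^pre(x_f, x_g, x_S; x) = f(x_f) + g(x_g) + ⟨S x_S, −x⟩ − f(x) − g(x). Suppose the iteration z^{k+1} = z^k − γ_k λ_k U_k⁻¹(∇̃f(x_f^k) + ∇̃g(x_g^k) + S x_S^k) holds, where ∇̃f(x_f^k) ∈ ∂f(x_f^k) and ∇̃g(x_g^k) ∈ ∂g(x_g^k). Then for all x ∈ H and k: 2γ_kλ_k G^pre(x_f^k, x_g^k, x_S^k; x) ≤ ‖z^k − x‖²_{U_k} − ‖z^{k+1} − x‖²_{U_k} − ‖z^{k+1} − z^k‖²_{U_k} + 2γ_kλ_k⟨x_f^k − z^{k+1}, ∇̃f(x_f^k)⟩ + 2γ_kλ_k⟨x_g^k − z^{k+1}, ∇̃g(x_g^k)⟩ + 2γ_kλ_k⟨−z^{k+1}, S x_S^k⟩. -/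
open RealInnerProductSpace

lemma ereal_sub_le_of_add_neg_le (a b : EReal) (r : ℝ)
    (h : a + ((-r : ℝ) : EReal) ≤ b) : a - b ≤ (r : EReal) := by
  induction a using EReal.rec with
  | bot => simp [EReal.bot_sub]
  | top =>
    induction b using EReal.rec with
    | bot =>
      exfalso
      have : (⊤ : EReal) + ((-r : ℝ) : EReal) = ⊤ := EReal.top_add_coe _
      rw [this] at h
      exact absurd h (by simp)
    | coe y =>
      exfalso
      have : (⊤ : EReal) + ((-r : ℝ) : EReal) = ⊤ := EReal.top_add_coe _
      rw [this] at h
      exact absurd h (by simp)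
    | top => simp [EReal.sub_top]
  | coe a' =>
    induction b using EReal.rec with
    | bot =>
      exfalso
      rw [← EReal.coe_add] at h
      exact absurd h (by simp)
    | coe y =>
      rw [← EReal.coe_add, EReal.coe_le_coe_iff] at h
      rw [← EReal.coe_sub, EReal.coe_le_coe_iff]
      linarith
    | top => simp [EReal.sub_top]

/-- Upper fundamental inequality for the unifying primal-dual scheme: the pre-primal-dual
gap `G^pre(x_f^k, x_g^k, x_S^k; x)` is bounded by the telescoping metric terms plus the
upper key term. -/
theorem fundamental_upper_inequality {H : Type*} [NormedAddCommGroup H]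
    [InnerProductSpace ℝ H] [CompleteSpace H]
    (f g : H → EReal) (S : H →L[ℝ] H)
    (hskew : ContinuousLinearMap.adjoint S = -S)
    (ρ : ℝ) (hρ : 0 < ρ)
    (U Uinv : ℕ → H →L[ℝ] H) (hUsa : ∀ k, IsSelfAdjoint (U k))
    (hUρ : ∀ k (x : H), ρ * ‖x‖ ^ 2 ≤ ⟪U k x, x⟫)
    (hinv₁ : ∀ k, U k ∘L Uinv k = ContinuousLinearMap.id ℝ H)
    (hinv₂ : ∀ k, Uinv k ∘L U k = ContinuousLinearMap.id ℝ H)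
    (γ lam : ℕ → ℝ) (hγ : ∀ k, 0 < γ k) (hlam : ∀ k, 0 < lam k)
    (z xf xg xS gf gg : ℕ → H)
    (hgf : ∀ k, ∀ y : H, f (xf k) + ((⟪y - xf k, gf k⟫ : ℝ) : EReal) ≤ f y)
    (hgg : ∀ k, ∀ y : H, g (xg k) + ((⟪y - xg k, gg k⟫ : ℝ) : EReal) ≤ g y)
    (hrec : ∀ k, z (k + 1) =
      z k - (γ k * lam k) • Uinv k (gf k + gg k + S (xS k))) :
    ∀ (x : H) (k : ℕ),
      ((2 * γ k * lam k : ℝ) : EReal) *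
          (f (xf k) + g (xg k) + ((⟪S (xS k), -x⟫ : ℝ) : EReal) - f x - g x) ≤
        ((⟪U k (z k - x), z k - x⟫ - ⟪U k (z (k + 1) - x), z (k + 1) - x⟫ -
            ⟪U k (z (k + 1) - z k), z (k + 1) - z k⟫ +
            2 * γ k * lam k * ⟪xf k - z (k + 1), gf k⟫ +
            2 * γ k * lam k * ⟪xg k - z (k + 1), gg k⟫ +
            2 * γ k * lam k * ⟪-z (k + 1), S (xS k)⟫ : ℝ) : EReal) := by
  intro x k
  set c : ℝ := γ k * lam k with hc
  have hcpos : (0:ℝ) < c := mul_pos (hγ k) (hlam k)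
  set w : H := gf k + gg k + S (xS k) with hw
  -- symmetry of U k
  have hsym := (ContinuousLinearMap.isSelfAdjoint_iff_isSymmetric.mp (hUsa k))
  have hsymUV : ∀ u v : H, (⟪U k u, v⟫ : ℝ) = ⟪U k v, u⟫ := by
    intro u v
    rw [hsym.apply_clm u v, real_inner_comm]
  -- U (z k - z (k+1)) = c • w
  have hUz : U k (z k - z (k + 1)) = c • w := by
    have h1 : z k - z (k + 1) = c • Uinv k w := by
      rw [hrec k]; abel
    have h2 : U k (Uinv k w) = w := by
      have := congrArg (fun T : H →L[ℝ] H => T w) (hinv₁ k)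
      simpa using this
    rw [h1, map_smul, h2]
  -- metric identity
  have hmetric : (⟪U k (z k - x), z k - x⟫ : ℝ) - ⟪U k (z (k + 1) - x), z (k + 1) - x⟫ -
      ⟪U k (z (k + 1) - z k), z (k + 1) - z k⟫ = 2 * c * ⟪w, z (k + 1) - x⟫ := by
    have ekey : z (k + 1) - z k = (z (k+1) - x) - (z k - x) := by abel
    have e2 : 2 * c * (⟪w, z (k + 1) - x⟫ : ℝ)
        = 2 * ⟪U k ((z k - x) - (z (k+1) - x)), z (k+1) - x⟫ := by
      have h3 : (z k - x) - (z (k+1) - x) = z k - z (k+1) := by abel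
      rw [h3, hUz, real_inner_smul_left]
      ring
    rw [ekey, e2]
    simp only [map_sub, inner_sub_left, inner_sub_right]
    linarith [hsymUV (z k) (z (k+1)), hsymUV (z k) x, hsymUV (z (k+1)) x,
      hsymUV x (z k), hsymUV x (z (k+1)), hsymUV (z (k+1)) (z k)]
  -- subgradient inequalities in subtraction form
  have hf : f (xf k) - f x ≤ ((⟪xf k - x, gf k⟫ : ℝ) : EReal) := by
    apply ereal_sub_le_of_add_neg_le
    have e : (-(⟪xf k - x, gf k⟫ : ℝ)) = ⟪x - xf k, gf k⟫ := by
      simp only [inner_sub_left]; ring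
    rw [e]
    exact hgf k x
  have hg : g (xg k) - g x ≤ ((⟪xg k - x, gg k⟫ : ℝ) : EReal) := by
    apply ereal_sub_le_of_add_neg_le
    have e : (-(⟪xg k - x, gg k⟫ : ℝ)) = ⟪x - xg k, gg k⟫ := by
      simp only [inner_sub_left]; ring
    rw [e]
    exact hgg k x
  set r : ℝ := ⟪xf k - x, gf k⟫ + ⟪xg k - x, gg k⟫ + ⟪S (xS k), -x⟫ with hr
  have hgap : f (xf k) + g (xg k) + ((⟪S (xS k), -x⟫ : ℝ) : EReal) - f x - g x
      ≤ ((r : ℝ) : EReal) := by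
    have e : f (xf k) + g (xg k) + ((⟪S (xS k), -x⟫ : ℝ) : EReal) - f x - g x
        = (f (xf k) - f x) + (g (xg k) - g x) + ((⟪S (xS k), -x⟫ : ℝ) : EReal) := by
      rw [sub_eq_add_neg, sub_eq_add_neg, sub_eq_add_neg, sub_eq_add_neg]
      simp only [add_assoc, add_comm, add_left_comm]
    rw [e, hr]
    push_cast
    exact add_le_add (add_le_add hf hg) le_rfl
  -- multiply by the positive constant
  have hmul : ((2 * γ k * lam k : ℝ) : EReal) *
      (f (xf k) + g (xg k) + ((⟪S (xS k), -x⟫ : ℝ) : EReal) - f x - g x)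
      ≤ ((2 * γ k * lam k : ℝ) : EReal) * ((r : ℝ) : EReal) :=
    mul_le_mul_of_nonneg_left hgap (by
      apply EReal.coe_nonneg.mpr
      have h1 := hγ k
      have h2 := hlam k
      nlinarith)
  refine hmul.trans ?_
  rw [← EReal.coe_mul, EReal.coe_le_coe_iff]
  -- now a real inequality (in fact equality)
  have hwexp : (⟪w, z (k + 1) - x⟫ : ℝ) = ⟪gf k, z (k+1) - x⟫ + ⟪gg k, z (k+1) - x⟫
      + ⟪S (xS k), z (k+1) - x⟫ := by
    rw [hw]; simp [inner_add_left]
  have h2c : 2 * γ k * lam k = 2 * c := by rw [hc]; ring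
  rw [h2c, hmetric, hwexp, hr]
  simp only [inner_sub_left, inner_neg_left, inner_sub_right, inner_neg_right]
  nlinarith [real_inner_comm (gf k) (xf k), real_inner_comm (gg k) (xg k),
    real_inner_comm (gf k) x, real_inner_comm (gg k) x,
    real_inner_comm (gf k) (z (k+1)), real_inner_comm (gg k) (z (k+1)),
    real_inner_comm (S (xS k)) (z (k+1)), real_inner_comm (S (xS k)) x]
end

section
/- Let U ⪰ ρI be self-adjoint, γ ∈ (0, 2βρ), g convex Fréchet differentiable with ∇g (1/β)-Lipschitz, and A maximally monotone (in particular A = ∂f + S). Then the forward-backward operator T = J_{γU⁻¹A} ∘ (I − γU⁻¹∇g) is α-averaged in ‖·‖_U with α = 2βρ/(4βρ − γ), and its fixed point set equals zer(A + ∇g). -/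
open RealInnerProductSpace

section FBAux
open Set


variable {H : Type*} [NormedAddCommGroup H] [InnerProductSpace ℝ H] [CompleteSpace H]

lemma fb_line_deriv (f : H → ℝ) (f' : H → H) (hf : ∀ x : H, HasGradientAt f (f' x) x)
    (a v : H) (t : ℝ) :
    HasDerivAt (fun s : ℝ => f (a + s • v)) ⟪f' (a + t • v), v⟫ t := by
  have hline : HasDerivAt (fun s : ℝ => a + s • v) v t := by
    simpa using ((hasDerivAt_id t).smul_const v).const_add a
  have hfd := (hf (a + t • v)).hasFDerivAt
  have := hfd.comp_hasDerivAt t hline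
  simp at this
  exact this

lemma fb_first_order (f : H → ℝ) (hconv : ConvexOn ℝ Set.univ f) (f' : H → H)
    (hf : ∀ x : H, HasGradientAt f (f' x) x) (a b : H) :
    f a + ⟪f' a, b - a⟫ ≤ f b := by
  set v := b - a with hv
  have hd : HasDerivAt (fun s : ℝ => f (a + s • v)) ⟪f' a, v⟫ 0 := by
    simpa using fb_line_deriv f f' hf a v 0
  rw [hasDerivAt_iff_tendsto_slope] at hd
  have hd' : Filter.Tendsto (slope (fun s : ℝ => f (a + s • v)) 0) (nhdsWithin 0 (Ioi 0))
      (nhds ⟪f' a, v⟫) := hd.mono_left (nhdsWithin_mono 0 (fun t ht => ne_of_gt ht))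
  have hub : ∀ᶠ t in nhdsWithin (0:ℝ) (Ioi 0),
      slope (fun s : ℝ => f (a + s • v)) 0 t ≤ f b - f a := by
    filter_upwards [Ioo_mem_nhdsGT_of_mem (show (0:ℝ) ∈ Ico (0:ℝ) 1 from ⟨le_refl _, one_pos⟩)]
    intro t ht
    have hconvineq := hconv.2 (mem_univ a) (mem_univ b) (by linarith [ht.2] : (0:ℝ) ≤ 1 - t)
      (le_of_lt ht.1) (by ring)
    simp only [smul_eq_mul] at hconvineq
    have heq : a + t • v = (1 - t) • a + t • b := by rw [hv]; module
    rw [slope_def_field]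
    simp only [zero_smul, add_zero, sub_zero]
    rw [div_le_iff₀ ht.1]
    rw [heq]; linarith
  have := le_of_tendsto hd' hub
  linarith

lemma fb_descent (β : ℝ) (hβ : 0 < β) (f : H → ℝ) (f' : H → H)
    (hf : ∀ x : H, HasGradientAt f (f' x) x)
    (hlip : ∀ x y : H, ‖f' x - f' y‖ ≤ (1 / β) * ‖x - y‖) (a v : H) :
    f (a + v) ≤ f a + ⟪f' a, v⟫ + ‖v‖ ^ 2 / (2 * β) := by
  set C : ℝ := ‖v‖ ^ 2 / (2 * β) with hC
  set ψ : ℝ → ℝ := fun t => f (a + t • v) - t * ⟪f' a, v⟫ - t ^ 2 * C with hψ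
  have hψd : ∀ t : ℝ, HasDerivAt ψ
      (⟪f' (a + t • v), v⟫ - ⟪f' a, v⟫ - 2 * t * C) t := by
    intro t
    have h1 := fb_line_deriv f f' hf a v t
    have h2 : HasDerivAt (fun s : ℝ => s * ⟪f' a, v⟫) ⟪f' a, v⟫ t := by
      simpa using hasDerivAt_mul_const (x := t) ⟪f' a, v⟫
    have h3 : HasDerivAt (fun s : ℝ => s ^ 2 * C) (2 * t * C) t := by
      have := (hasDerivAt_pow 2 t).mul_const C
      simpa [pow_one] using this
    exact (h1.sub h2).sub h3
  have hdiff : Differentiable ℝ ψ := fun t => (hψd t).differentiableAt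
  have hanti : AntitoneOn ψ (Icc 0 1) := by
    apply antitoneOn_of_deriv_nonpos (convex_Icc 0 1) hdiff.continuous.continuousOn
      (hdiff.differentiableOn)
    intro t ht
    rw [interior_Icc] at ht
    rw [(hψd t).deriv]
    have hca : ⟪f' (a + t • v) - f' a, v⟫ ≤ ‖f' (a + t • v) - f' a‖ * ‖v‖ :=
      real_inner_le_norm _ _
    have hl := hlip (a + t • v) a
    have hnorm : ‖a + t • v - a‖ = t * ‖v‖ := by
      simp [norm_smul, abs_of_pos ht.1]
    rw [hnorm] at hl
    have hinner : ⟪f' (a + t • v) - f' a, v⟫ = ⟪f' (a + t • v), v⟫ - ⟪f' a, v⟫ :=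
      inner_sub_left _ _ _
    have hvn : (0:ℝ) ≤ ‖v‖ := norm_nonneg v
    have hC2 : 2 * t * C = t * ‖v‖ ^ 2 / β := by rw [hC]; field_simp
    rw [hC2]
    have hs : ‖f' (a + t • v) - f' a‖ * ‖v‖ ≤ 1 / β * (t * ‖v‖) * ‖v‖ :=
      mul_le_mul_of_nonneg_right hl hvn
    have heq2 : 1 / β * (t * ‖v‖) * ‖v‖ = t * ‖v‖ ^ 2 / β := by field_simp
    linarith [hca, hs]
  have h01 := hanti (show (0:ℝ) ∈ Icc (0:ℝ) 1 from ⟨le_refl _, zero_le_one⟩)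
    (show (1:ℝ) ∈ Icc (0:ℝ) 1 from ⟨zero_le_one, le_refl _⟩) zero_le_one
  have hψ0 : ψ 0 = f a := by simp [hψ]
  have hψ1 : ψ 1 = f (a + v) - ⟪f' a, v⟫ - C := by simp [hψ]
  rw [hψ0, hψ1] at h01
  linarith

lemma fb_baillon_one (β : ℝ) (hβ : 0 < β) (f : H → ℝ) (hconv : ConvexOn ℝ Set.univ f)
    (f' : H → H) (hf : ∀ x : H, HasGradientAt f (f' x) x)
    (hlip : ∀ x y : H, ‖f' x - f' y‖ ≤ (1 / β) * ‖x - y‖) (x y : H) :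
    f y - ⟪f' y, y⟫ + (β / 2) * ‖f' x - f' y‖ ^ 2 ≤ f x - ⟪f' y, x⟫ := by
  set c : H := f' y with hc
  set h : H → ℝ := fun z => f z - ⟪c, z⟫ with hh
  set h' : H → H := fun z => f' z - c with hh'
  have hgrad : ∀ z : H, HasGradientAt h (h' z) z := by
    intro z
    rw [hasGradientAt_iff_hasFDerivAt]
    have h1 := (hf z).hasFDerivAt
    have h2 : HasFDerivAt (fun w : H => ⟪c, w⟫) (InnerProductSpace.toDual ℝ H c : H →L[ℝ] ℝ) z :=
      (InnerProductSpace.toDual ℝ H c : H →L[ℝ] ℝ).hasFDerivAt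
    have h3 := h1.sub h2
    simp only [hh', map_sub]
    exact h3
  have hhconv : ConvexOn ℝ Set.univ h := by
    refine ⟨convex_univ, ?_⟩
    intro u _ w _ s t hs ht hst
    have := hconv.2 (Set.mem_univ u) (Set.mem_univ w) hs ht hst
    simp only [smul_eq_mul] at this ⊢
    simp only [hh, inner_add_right, real_inner_smul_right]
    linarith
  have hhlip : ∀ z w : H, ‖h' z - h' w‖ ≤ (1 / β) * ‖z - w‖ := by
    intro z w
    have he : h' z - h' w = f' z - f' w := by simp [hh']
    rw [he]; exact hlip z w
  have hdes := fb_descent β hβ h h' hgrad hhlip x (-β • h' x)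
  have hfo := fb_first_order h hhconv h' hgrad y (x + -β • h' x)
  have hzero : h' y = 0 := by simp [hh', hc]
  rw [hzero] at hfo
  simp only [inner_zero_left, add_zero] at hfo
  have hv : ⟪h' x, -β • h' x⟫ = -β * ‖h' x‖ ^ 2 := by
    rw [real_inner_smul_right, real_inner_self_eq_norm_sq]
  have hnv : ‖-β • h' x‖ ^ 2 = β ^ 2 * ‖h' x‖ ^ 2 := by
    rw [norm_smul, Real.norm_eq_abs, abs_neg, abs_of_pos hβ]; ring
  rw [hv, hnv] at hdes
  have hb2 : β ^ 2 * ‖h' x‖ ^ 2 / (2 * β) = (β / 2) * ‖h' x‖ ^ 2 := by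
    field_simp
  rw [hb2] at hdes
  have hkey := hfo.trans hdes
  have hgy : h y = f y - ⟪c, y⟫ := rfl
  have hgx : h x = f x - ⟪c, x⟫ := rfl
  have hgx' : h' x = f' x - c := rfl
  rw [hgy, hgx, hgx'] at hkey
  linarith
lemma fb_coco (β : ℝ) (hβ : 0 < β) (f : H → ℝ) (hconv : ConvexOn ℝ Set.univ f)
    (f' : H → H) (hf : ∀ x : H, HasGradientAt f (f' x) x)
    (hlip : ∀ x y : H, ‖f' x - f' y‖ ≤ (1 / β) * ‖x - y‖) (x y : H) :
    β * ‖f' x - f' y‖ ^ 2 ≤ ⟪f' x - f' y, x - y⟫ := by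
  have h1 := fb_baillon_one β hβ f hconv f' hf hlip x y
  have h2 := fb_baillon_one β hβ f hconv f' hf hlip y x
  rw [norm_sub_rev] at h2
  have hexp : ⟪f' x - f' y, x - y⟫ =
      ⟪f' x, x⟫ - ⟪f' x, y⟫ - ⟪f' y, x⟫ + ⟪f' y, y⟫ := by
    simp [inner_sub_left, inner_sub_right]; ring
  rw [hexp]
  linarith

lemma fb_scalar (β ρ γ qz qp qv bpz bpv bzv d : ℝ)
    (hρ : 0 < ρ) (hβ : 0 < β) (hγ0 : 0 < γ) (hγ2 : γ < 2 * β * ρ)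
    (h1 : qp ≤ bpz - γ * bpv)
    (h2 : β * d ≤ bzv)
    (h3 : ρ * qv ≤ d)
    (hY : 0 ≤ (2 * β * ρ - γ) ^ 2 * qv - 2 * (2 * β * ρ - γ) * (bzv - γ * qv - bpv)
        + (qz - 2 * γ * bzv + γ ^ 2 * qv - 2 * bpz + 2 * γ * bpv + qp)) :
    qz + 2 * ((4 * β * ρ - γ) / (2 * β * ρ)) * (bpz - qz)
      + ((4 * β * ρ - γ) / (2 * β * ρ)) ^ 2 * (qp - 2 * bpz + qz) ≤ qz := by
  have hm : (0:ℝ) < 2 * β * ρ := by positivity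
  have hc : (0:ℝ) < 2 * β * ρ - γ := by linarith
  set m : ℝ := 2 * β * ρ with hmdef
  set c : ℝ := m - γ with hcdef
  -- key : m*qp + c*(qp - 2*bpz + qz) ≤ m*qz
  have hs1 : (2*m) * qp ≤ (2*m) * (bpz - γ * bpv) :=
    mul_le_mul_of_nonneg_left h1 (by positivity)
  have hs2 : (2*γ*m) * (β * d) ≤ (2*γ*m) * bzv :=
    mul_le_mul_of_nonneg_left h2 (by positivity)
  have hs3 : (2*β*γ*m) * (ρ * qv) ≤ (2*β*γ*m) * d :=
    mul_le_mul_of_nonneg_left h3 (by positivity)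
  have hsY : 0 ≤ γ * ((2 * β * ρ - γ) ^ 2 * qv - 2 * (2 * β * ρ - γ) * (bzv - γ * qv - bpv)
        + (qz - 2 * γ * bzv + γ ^ 2 * qv - 2 * bpz + 2 * γ * bpv + qp)) :=
    mul_nonneg hγ0.le hY
  have key : m * qp + c * (qp - 2 * bpz + qz) ≤ m * qz := by
    rw [hcdef, hmdef] at *
    nlinarith [hs1, hs2, hs3, hsY]
  have key2 : (m + c) * (m * qp + c * (qp - 2 * bpz + qz)) ≤ (m + c) * (m * qz) :=
    mul_le_mul_of_nonneg_left key (by positivity)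
  set k : ℝ := (4 * β * ρ - γ) / (2 * β * ρ) with hkdef
  have hk : m * k = m + c := by
    rw [hkdef, hmdef, hcdef, hmdef]
    field_simp
    ring
  have hfinal : m ^ 2 * (qz + 2 * k * (bpz - qz) + k ^ 2 * (qp - 2 * bpz + qz))
      ≤ m ^ 2 * qz := by
    have expand : m ^ 2 * (qz + 2 * k * (bpz - qz) + k ^ 2 * (qp - 2 * bpz + qz))
        = m ^ 2 * qz + 2 * (m * k) * m * (bpz - qz) + (m * k) ^ 2 * (qp - 2 * bpz + qz) := by
      ring
    rw [expand, hk]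
    nlinarith [key2]
  exact le_of_mul_le_mul_left hfinal (by positivity)



end FBAux

/-- The forward-backward operator `T = J_{γU⁻¹A} ∘ (I - γU⁻¹∇g)` is
`α = 2βρ/(4βρ - γ)`-averaged in `‖·‖_U` for `γ ∈ (0, 2βρ)`, and its fixed point set
equals `zer(A + ∇g)`. -/
theorem forward_backward_averaged {H : Type*} [NormedAddCommGroup H]
    [InnerProductSpace ℝ H] [CompleteSpace H]
    (ρ β γ : ℝ) (hρ : 0 < ρ) (hβ : 0 < β) (hγ : γ ∈ Set.Ioo 0 (2 * β * ρ))
    (U Uinv : H →L[ℝ] H) (hU : IsSelfAdjoint U)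
    (hstrong : ∀ x : H, ρ * ‖x‖ ^ 2 ≤ ⟪U x, x⟫)
    (hinv₁ : U ∘L Uinv = ContinuousLinearMap.id ℝ H)
    (hinv₂ : Uinv ∘L U = ContinuousLinearMap.id ℝ H)
    (A : H → Set H)
    (hmono : ∀ x y u v : H, u ∈ A x → v ∈ A y → 0 ≤ ⟪x - y, u - v⟫)
    (hmax : ∀ x u : H, (∀ y v : H, v ∈ A y → 0 ≤ ⟪x - y, u - v⟫) → u ∈ A x)
    (g : H → ℝ) (hgconv : ConvexOn ℝ Set.univ g)
    (g' : H → H) (hg' : ∀ x : H, HasGradientAt g (g' x) x)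
    (hlip : ∀ x y : H, ‖g' x - g' y‖ ≤ (1 / β) * ‖x - y‖)
    (J : H → H) (hJ : ∀ z : H, γ⁻¹ • U (z - J z) ∈ A (J z))
    (T : H → H) (hT : ∀ z : H, T z = J (z - γ • Uinv (g' z))) :
    (∃ N : H → H,
        (∀ x y : H, ⟪U (N x - N y), N x - N y⟫ ≤ ⟪U (x - y), x - y⟫) ∧
        ∀ z : H, T z = (1 - 2 * β * ρ / (4 * β * ρ - γ)) • z +
          (2 * β * ρ / (4 * β * ρ - γ)) • N z) ∧
    {z : H | T z = z} = {z : H | -g' z ∈ A z} := by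
  obtain ⟨hγ0, hγ2⟩ := hγ
  have hγne : γ ≠ 0 := ne_of_gt hγ0
  have hsym : ∀ a b : H, ⟪U a, b⟫ = ⟪U b, a⟫ := by
    intro a b
    conv_lhs => rw [← hU]
    rw [ContinuousLinearMap.star_eq_adjoint, ContinuousLinearMap.adjoint_inner_left,
      real_inner_comm]
  have hUinv : ∀ a : H, U (Uinv a) = a := by
    intro a
    have := ContinuousLinearMap.ext_iff.mp hinv₁ a
    simpa using this
  have hQnn : ∀ a : H, (0:ℝ) ≤ ⟪U a, a⟫ := fun a => le_trans (by positivity) (hstrong a)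
  set k : ℝ := (4 * β * ρ - γ) / (2 * β * ρ) with hkdef
  have hm : (0:ℝ) < 2 * β * ρ := by positivity
  have h4 : (0:ℝ) < 4 * β * ρ - γ := by linarith
  constructor
  · -- averagedness
    refine ⟨fun z => z + k • (T z - z), ?_, ?_⟩
    · intro x y
      set z : H := x - y with hz
      set p : H := T x - T y with hp
      set Δ : H := g' x - g' y with hΔ
      set v : H := Uinv Δ with hv
      have hUv : U v = Δ := hUinv Δ
      -- firm nonexpansiveness of the resolvent
      have h1 : ⟪U p, p⟫ ≤ ⟪U p, z⟫ - γ * ⟪U p, v⟫ := by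
        have hx' := hJ (x - γ • Uinv (g' x))
        have hy' := hJ (y - γ • Uinv (g' y))
        have h0 := hmono _ _ _ _ hx' hy'
        rw [← hT x, ← hT y] at h0
        have harg : γ⁻¹ • U (x - γ • Uinv (g' x) - T x)
            - γ⁻¹ • U (y - γ • Uinv (g' y) - T y)
            = γ⁻¹ • U ((z - γ • v) - p) := by
          rw [← smul_sub, ← map_sub]
          congr 2
          rw [hp, hz, hv, hΔ, map_sub]
          module
        rw [harg] at h0
        have h0' : 0 ≤ γ⁻¹ * ⟪p, U ((z - γ • v) - p)⟫ := by
          rwa [real_inner_smul_right] at h0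
        have h0'' : 0 ≤ ⟪p, U ((z - γ • v) - p)⟫ :=
          (mul_nonneg_iff_of_pos_left (inv_pos.mpr hγ0)).mp h0'
        have hswap : ∀ q : H, ⟪p, U q⟫ = ⟪U p, q⟫ := fun q => by
          rw [real_inner_comm, hsym]
        have hexp : ⟪p, U ((z - γ • v) - p)⟫ = ⟪U p, z⟫ - γ * ⟪U p, v⟫ - ⟪U p, p⟫ := by
          rw [hswap]
          simp only [inner_sub_right, real_inner_smul_right]
        rw [hexp] at h0''
        linarith
      -- cocoercivity
      have h2 : β * ‖Δ‖ ^ 2 ≤ ⟪U z, v⟫ := by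
        have hcoco := fb_coco β hβ g hgconv g' hg' hlip x y
        have he : ⟪U z, v⟫ = ⟪Δ, z⟫ := by rw [hsym z v, hUv, real_inner_comm]
        rw [he, hz]
        exact hcoco
      -- bound on the inverse metric
      have h3 : ρ * ⟪U v, v⟫ ≤ ‖Δ‖ ^ 2 := by
        have hQvΔ : ⟪U v, v⟫ = ⟪Δ, v⟫ := by rw [hUv]
        have s1 : ρ * ‖v‖ ^ 2 ≤ ‖Δ‖ * ‖v‖ :=
          (hstrong v).trans (by rw [hQvΔ]; exact real_inner_le_norm Δ v)
        have rr := mul_le_mul_of_nonneg_left s1 hρ.le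
        have r1 := mul_le_mul_of_nonneg_left (real_inner_le_norm Δ v) hρ.le
        rw [hQvΔ]
        nlinarith [sq_nonneg (ρ * ‖v‖ - ‖Δ‖)]
      -- Young-type positivity
      have hY : 0 ≤ (2 * β * ρ - γ) ^ 2 * ⟪U v, v⟫
          - 2 * (2 * β * ρ - γ) * (⟪U z, v⟫ - γ * ⟪U v, v⟫ - ⟪U p, v⟫)
          + (⟪U z, z⟫ - 2 * γ * ⟪U z, v⟫ + γ ^ 2 * ⟪U v, v⟫ - 2 * ⟪U p, z⟫
            + 2 * γ * ⟪U p, v⟫ + ⟪U p, p⟫) := by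
        have h0 := hQnn (z - γ • v - p - (2 * β * ρ - γ) • v)
        have hid : ⟪U (z - γ • v - p - (2 * β * ρ - γ) • v),
            z - γ • v - p - (2 * β * ρ - γ) • v⟫
            = (2 * β * ρ - γ) ^ 2 * ⟪U v, v⟫
              - 2 * (2 * β * ρ - γ) * (⟪U z, v⟫ - γ * ⟪U v, v⟫ - ⟪U p, v⟫)
              + (⟪U z, z⟫ - 2 * γ * ⟪U z, v⟫ + γ ^ 2 * ⟪U v, v⟫ - 2 * ⟪U p, z⟫
                + 2 * γ * ⟪U p, v⟫ + ⟪U p, p⟫) := by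
          simp only [map_sub, map_smul, inner_sub_left, inner_sub_right,
            real_inner_smul_left, real_inner_smul_right]
          simp only [hsym v z, hsym z p, hsym v p]
          ring
        rw [hid] at h0
        exact h0
      -- reduce the goal to the scalar inequality
      have hng : (x + k • (T x - x)) - (y + k • (T y - y)) = z + k • (p - z) := by
        rw [hz, hp]; module
      have hbil : ⟪U (z + k • (p - z)), z + k • (p - z)⟫
          = ⟪U z, z⟫ + 2 * k * (⟪U p, z⟫ - ⟪U z, z⟫)
            + k ^ 2 * (⟪U p, p⟫ - 2 * ⟪U p, z⟫ + ⟪U z, z⟫) := by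
        simp only [map_add, map_sub, map_smul, inner_add_left, inner_add_right,
          inner_sub_left, inner_sub_right, real_inner_smul_left, real_inner_smul_right]
        simp only [hsym z p]
        ring
      show ⟪U ((x + k • (T x - x)) - (y + k • (T y - y))),
          (x + k • (T x - x)) - (y + k • (T y - y))⟫ ≤ ⟪U (x - y), x - y⟫
      rw [hng, hbil, ← hz]
      exact fb_scalar β ρ γ ⟪U z, z⟫ ⟪U p, p⟫ ⟪U v, v⟫ ⟪U p, z⟫ ⟪U p, v⟫ ⟪U z, v⟫
        (‖Δ‖ ^ 2) hρ hβ hγ0 hγ2 h1 h2 h3 hY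
    · intro z
      have hαk : (2 * β * ρ / (4 * β * ρ - γ)) * k = 1 := by
        rw [hkdef]; field_simp; exact div_self (ne_of_gt (by linarith))
      have hmod : (1 - 2 * β * ρ / (4 * β * ρ - γ)) • z
          + (2 * β * ρ / (4 * β * ρ - γ)) • (z + k • (T z - z))
          = z + ((2 * β * ρ / (4 * β * ρ - γ)) * k) • (T z - z) := by
        module
      rw [hmod, hαk, one_smul]
      abel
  · -- fixed point characterization
    ext w
    simp only [Set.mem_setOf_eq]
    constructor
    · intro hTw
      have hmem := hJ (w - γ • Uinv (g' w))
      rw [← hT w, hTw] at hmem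
      have harg : γ⁻¹ • U (w - γ • Uinv (g' w) - w) = -g' w := by
        have : w - γ • Uinv (g' w) - w = -(γ • Uinv (g' w)) := by abel
        rw [this, map_neg, map_smul, hUinv, smul_neg, smul_smul,
          inv_mul_cancel₀ hγne, one_smul]
      rwa [harg] at hmem
    · intro hmem
      set p : H := J (w - γ • Uinv (g' w)) with hpdef
      have hmemp := hJ (w - γ • Uinv (g' w))
      rw [← hpdef] at hmemp
      have h0 := hmono p w _ _ hmemp hmem
      have harg : γ⁻¹ • U (w - γ • Uinv (g' w) - p) - -g' w = γ⁻¹ • U (w - p) := by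
        have he : w - γ • Uinv (g' w) - p = (w - p) - γ • Uinv (g' w) := by abel
        rw [he, map_sub, map_smul, hUinv, smul_sub, smul_smul, inv_mul_cancel₀ hγne,
          one_smul]
        abel
      rw [harg] at h0
      have h0' : 0 ≤ γ⁻¹ * ⟪p - w, U (w - p)⟫ := by
        rwa [real_inner_smul_right] at h0
      have h0'' : 0 ≤ ⟪p - w, U (w - p)⟫ :=
        (mul_nonneg_iff_of_pos_left (inv_pos.mpr hγ0)).mp h0'
      have hneg : ⟪p - w, U (w - p)⟫ = -⟪U (p - w), p - w⟫ := by
        have : U (w - p) = -U (p - w) := by rw [← map_neg]; congr 1; abel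
        rw [this, inner_neg_right, real_inner_comm]
      rw [hneg] at h0''
      have hsq := hstrong (p - w)
      have hzero : ‖p - w‖ ^ 2 ≤ 0 := by nlinarith
      have : p - w = 0 := by
        rw [← norm_eq_zero]
        nlinarith [norm_nonneg (p - w), sq_nonneg ‖p - w‖]
      have hpw : p = w := by rwa [sub_eq_zero] at this
      rw [hT w, ← hpdef, hpw]
end

section
/- (FPR convergence rate) Let α ∈ (0,1), U ⪰ ρI self-adjoint, T : H → H α-averaged in ‖·‖_U with fixed point z*, and (λ_j) ⊆ (0, 1/α) with τ_k := (1−αλ_k)λ_k/α and τ̲ := inf_j τ_j > 0. Define z^{k+1} = (1−λ_k)z^k + λ_k T z^k. Then for all k: ‖Tz^k − z^k‖²_U ≤ ‖z^0 − z*‖²_U / (τ̲(k+1)). -/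
open RealInnerProductSpace

set_option maxHeartbeats 1000000 in
/-- Fixed-point residual convergence rate: for a relaxed KM iteration of an `α`-averaged
map `T` in `‖·‖_U`, `‖Tz^k - z^k‖²_U ≤ ‖z^0 - z*‖²_U / (τ̲ (k+1))`. -/
theorem FPR_rate {H : Type*} [NormedAddCommGroup H] [InnerProductSpace ℝ H]
    [CompleteSpace H] (ρ α : ℝ) (hρ : 0 < ρ) (hα : α ∈ Set.Ioo (0 : ℝ) 1)
    (U : H →L[ℝ] H) (hU : IsSelfAdjoint U)
    (hstrong : ∀ x : H, ρ * ‖x‖ ^ 2 ≤ ⟪U x, x⟫)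
    (T : H → H)
    (hT : ∃ N : H → H,
        (∀ x y : H, ⟪U (N x - N y), N x - N y⟫ ≤ ⟪U (x - y), x - y⟫) ∧
        ∀ x : H, T x = (1 - α) • x + α • N x)
    (zs : H) (hfix : T zs = zs)
    (lam : ℕ → ℝ) (hlam : ∀ k, lam k ∈ Set.Ioo (0 : ℝ) (1 / α))
    (htau : 0 < ⨅ j : ℕ, (1 - α * lam j) * lam j / α)
    (z : ℕ → H) (hrec : ∀ k, z (k + 1) = (1 - lam k) • z k + lam k • T (z k)) :
    ∀ k : ℕ,
      ⟪U (T (z k) - z k), T (z k) - z k⟫ ≤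
        ⟪U (z 0 - zs), z 0 - zs⟫ /
          ((⨅ j : ℕ, (1 - α * lam j) * lam j / α) * (k + 1)) := by
  obtain ⟨N, hN, hTN⟩ := hT
  obtain ⟨hα0, hα1⟩ := hα
  set Q : H → ℝ := fun x => ⟪U x, x⟫ with hQdef
  set B : H → H → ℝ := fun x y => ⟪U x, y⟫ with hBdef
  have hQnonneg : ∀ x, 0 ≤ Q x := fun x => le_trans (by positivity) (hstrong x)
  have hQzero : ∀ x, Q x = 0 → x = 0 := by
    intro x hx
    have h1 := hstrong x
    rw [show (⟪U x, x⟫ : ℝ) = Q x from rfl, hx] at h1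
    have : ‖x‖ ^ 2 ≤ 0 := by nlinarith
    have : ‖x‖ = 0 := by nlinarith [sq_nonneg ‖x‖, norm_nonneg x]
    simpa using this
  have hBsymm : ∀ x y, B x y = B y x := by
    intro x y
    have h := hU.isSymmetric x y
    exact h.trans (real_inner_comm _ _)
  -- expansion lemma
  have hQexp : ∀ (a b : ℝ) (u v : H),
      Q (a • u + b • v) = a^2 * Q u + a*b*B u v + a*b*B v u + b^2 * Q v := by
    intro a b u v
    simp only [hQdef, hBdef, map_add, map_smul, inner_add_left, inner_add_right,
      real_inner_smul_left, real_inner_smul_right]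
    ring
  have hQsub : ∀ u v : H, Q (u - v) = Q u - B u v - B v u + Q v := by
    intro u v
    have := hQexp 1 (-1) u v
    simp only [one_smul, neg_one_smul, ← sub_eq_add_neg] at this
    rw [this]; ring
  have hCS : ∀ u v : H, (B u v)^2 ≤ Q u * Q v := by
    intro u v
    rcases eq_or_ne (Q v) 0 with hv | hv
    · have hv0 : v = 0 := hQzero v hv
      subst hv0
      simp [hBdef, hv]
    · have hvpos : 0 < Q v := lt_of_le_of_ne (hQnonneg v) (Ne.symm hv)
      have h0 : 0 ≤ Q ((Q v) • u + (-(B u v)) • v) := hQnonneg _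
      rw [hQexp] at h0
      rw [← hBsymm u v] at h0
      nlinarith [h0, hvpos]
  have hQsmul : ∀ (c : ℝ) (w : H), Q (c • w) = c^2 * Q w := by
    intro c w
    simp only [hQdef, map_smul, real_inner_smul_left, real_inner_smul_right]
    ring
  have hN' : ∀ x y : H, Q (N x - N y) ≤ Q (x - y) := hN
  set tau : ℕ → ℝ := fun j => (1 - α * lam j) * lam j / α with htaudef
  have ht01 : ∀ k, 0 < α * lam k ∧ α * lam k < 1 := by
    intro k
    obtain ⟨h1, h2⟩ := hlam k
    constructor
    · positivity
    · calc α * lam k < α * (1/α) := by apply mul_lt_mul_of_pos_left h2 hα0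
        _ = 1 := by field_simp
  have htaupos : ∀ j, 0 < tau j := by
    intro j
    have := ht01 j
    have := (hlam j).1
    have : 0 < (1 - α * lam j) * lam j := by nlinarith [(ht01 j).2, (hlam j).1]
    exact div_pos this hα0
  have hbdd : BddBelow (Set.range tau) := by
    refine ⟨0, ?_⟩
    rintro x ⟨j, rfl⟩
    exact le_of_lt (htaupos j)
  have htlei : ∀ k, (⨅ j, tau j) ≤ tau k := fun k => ciInf_le hbdd k
  set tinf : ℝ := ⨅ j, tau j with htinfdef
  -- fixed point of N
  have hNzs : N zs = zs := by
    have h := hfix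
    rw [hTN] at h
    have h2 : α • N zs = α • zs := by
      have h' : α • N zs = zs - (1 - α) • zs := by
        rw [eq_sub_iff_add_eq, add_comm]; exact h
      rw [h', sub_smul, one_smul]; abel
    exact smul_right_injective H (ne_of_gt hα0) h2
  -- residual formula
  have hres : ∀ x : H, T x - x = α • (N x - x) := by
    intro x
    rw [hTN, sub_smul, one_smul, smul_sub]
    abel
  have hQres : ∀ x : H, Q (T x - x) = α^2 * Q (N x - x) := by
    intro x
    rw [hres, hQsmul]
  -- step formula
  have hstep : ∀ k, z (k+1) = z k + (α * lam k) • (N (z k) - z k) := by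
    intro k
    rw [hrec, hTN]
    module
  have hdiff : ∀ k, z (k+1) - zs
      = (1 - α * lam k) • (z k - zs) + (α * lam k) • (N (z k) - zs) := by
    intro k
    rw [hstep]
    module
  -- key decrease inequality
  have key1 : ∀ k, Q (z (k+1) - zs) + tau k * Q (T (z k) - z k) ≤ Q (z k - zs) := by
    intro k
    obtain ⟨ht0, ht1⟩ := ht01 k
    set t := α * lam k with htdef
    set u := z k - zs with hudef
    set v := N (z k) - zs with hvdef
    have he : Q (z (k+1) - zs)
        = (1-t)^2 * Q u + (1-t)*t*B u v + (1-t)*t*B v u + t^2 * Q v := by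
      rw [hdiff k, hQexp]
    have hnon : Q v ≤ Q u := by
      have := hN' (z k) zs
      rw [hNzs] at this
      exact this
    have hQvu : Q (v - u) = Q v - B v u - B u v + Q u := hQsub v u
    have hvu : v - u = N (z k) - z k := by rw [hvdef, hudef]; abel
    have htq : tau k * Q (T (z k) - z k) = t * (1-t) * Q (v - u) := by
      rw [hQres, hvu, htaudef]
      field_simp
      ring
    rw [he, htq, hQvu]
    nlinarith [mul_nonneg (le_of_lt ht0) (sub_nonneg.mpr hnon), ht0, ht1, hnon]
  -- residual monotonicity
  have key2 : ∀ k, Q (T (z (k+1)) - z (k+1)) ≤ Q (T (z k) - z k) := by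
    intro k
    obtain ⟨ht0, ht1⟩ := ht01 k
    set t := α * lam k with htdef
    set s := N (z k) - z k with hsdef
    set a := N (z (k+1)) - N (z k) with hadef
    have hs' : N (z (k+1)) - z (k+1) = (1:ℝ) • a + (1-t) • s := by
      rw [hadef, hsdef, hstep k]
      module
    have hQa : Q a ≤ t^2 * Q s := by
      have h1 := hN' (z (k+1)) (z k)
      have h2 : z (k+1) - z k = t • s := by rw [hstep k]; module
      rw [h2, hQsmul] at h1
      exact h1
    have hcs := hCS a s
    have hQs := hQnonneg s
    have hts : 0 ≤ t * Q s := mul_nonneg (le_of_lt ht0) hQs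
    have hBas : B a s ≤ t * Q s := by
      nlinarith [hcs, hQa, hQs, hts, hQnonneg a, sq_nonneg (B a s - t * Q s)]
    have hBsa : B s a ≤ t * Q s := by rw [hBsymm]; exact hBas
    have hexp : Q (N (z (k+1)) - z (k+1))
        = 1^2 * Q a + 1*(1-t)*B a s + 1*(1-t)*B s a + (1-t)^2 * Q s := by
      rw [hs', hQexp]
    have hfin : Q (N (z (k+1)) - z (k+1)) ≤ Q s := by
      rw [hexp]
      nlinarith [hQa, hBas, hBsa, ht0, ht1, hQs]
    rw [hQres, hQres]
    have : Q (N (z k) - z k) = Q s := rfl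
    nlinarith [hfin, sq_nonneg α]
  -- telescoping
  have hQr : ∀ k, 0 ≤ Q (T (z k) - z k) := fun k => hQnonneg _
  have main : ∀ k : ℕ, ((k:ℝ)+1) * tinf * Q (T (z k) - z k) + Q (z (k+1) - zs)
      ≤ Q (z 0 - zs) := by
    intro k
    induction k with
    | zero =>
      have h1 := key1 0
      have h2 : tinf ≤ tau 0 := htlei 0
      have := mul_le_mul_of_nonneg_right h2 (hQr 0)
      simp only [Nat.cast_zero]
      linarith
    | succ k ih =>
      have h1 := key1 (k+1)
      have h2 : tinf * Q (T (z (k+1)) - z (k+1)) ≤ tau (k+1) * Q (T (z (k+1)) - z (k+1)) :=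
        mul_le_mul_of_nonneg_right (htlei (k+1)) (hQr (k+1))
      have hk1 : (0:ℝ) ≤ ((k:ℝ)+1) * tinf :=
        mul_nonneg (by positivity) (le_of_lt htau)
      have h3 : ((k:ℝ)+1) * tinf * Q (T (z (k+1)) - z (k+1))
          ≤ ((k:ℝ)+1) * tinf * Q (T (z k) - z k) :=
        mul_le_mul_of_nonneg_left (key2 k) hk1
      push_cast
      push_cast at ih
      linarith
  intro k
  show Q (T (z k) - z k) ≤ Q (z 0 - zs) / (tinf * ((k:ℝ)+1))
  have hpos : 0 < tinf * ((k:ℝ)+1) := mul_pos htau (by positivity)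
  rw [le_div_iff₀ hpos]
  have := main k
  have := hQnonneg (z (k+1) - zs)
  nlinarith [main k, hQnonneg (z (k+1) - zs)]
end

section
/- (Ergodic FPR bound for PRS) Let T be nonexpansive in ‖·‖_U with fixed point z*, λ_i ∈ (0,2], γ > 0, and define z^{i+1} = (1−λ_i/2)z^i + (λ_i/2)Tz^i, with points x_f^i, x_g^i satisfying λ_i(x_f^i − x_g^i) = z^{i+1} − z^i. Set Σ_k = ∑_{i=0}^k γλ_i and the ergodic averages x̄_f^k = (1/Σ_k)∑_{i=0}^k γλ_i x_f^i, x̄_g^k = (1/Σ_k)∑_{i=0}^k γλ_i x_g^i. Then ‖x̄_f^k − x̄_g^k‖_U ≤ 2γ‖z^0 − z*‖_U / Σ_k. -/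
open RealInnerProductSpace

/-- Ergodic fixed-point-residual bound for relaxed PRS: the `U`-norm distance between the
ergodic averages of the two splitting variables is at most `2γ‖z^0 - z*‖_U / Σ_k`. -/
theorem ergodic_PRS_sequence_distance {H : Type*} [NormedAddCommGroup H]
    [InnerProductSpace ℝ H] [CompleteSpace H]
    (ρ γ : ℝ) (hρ : 0 < ρ) (hγ : 0 < γ)
    (U : H →L[ℝ] H) (hU : IsSelfAdjoint U)
    (hstrong : ∀ x : H, ρ * ‖x‖ ^ 2 ≤ ⟪U x, x⟫)
    (T : H → H)
    (hT : ∀ x y : H, ⟪U (T x - T y), T x - T y⟫ ≤ ⟪U (x - y), x - y⟫)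
    (zs : H) (hfix : T zs = zs)
    (lam : ℕ → ℝ) (hlam : ∀ i, lam i ∈ Set.Ioc (0 : ℝ) 2)
    (z xf xg : ℕ → H)
    (hrec : ∀ i, z (i + 1) = (1 - lam i / 2) • z i + (lam i / 2) • T (z i))
    (hfpr : ∀ i, lam i • (xf i - xg i) = z (i + 1) - z i) :
    ∀ k : ℕ,
      Real.sqrt
          ⟪U ((∑ i ∈ Finset.range (k + 1), γ * lam i)⁻¹ •
                ∑ i ∈ Finset.range (k + 1), (γ * lam i) • xf i -
              (∑ i ∈ Finset.range (k + 1), γ * lam i)⁻¹ •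
                ∑ i ∈ Finset.range (k + 1), (γ * lam i) • xg i),
            (∑ i ∈ Finset.range (k + 1), γ * lam i)⁻¹ •
                ∑ i ∈ Finset.range (k + 1), (γ * lam i) • xf i -
              (∑ i ∈ Finset.range (k + 1), γ * lam i)⁻¹ •
                ∑ i ∈ Finset.range (k + 1), (γ * lam i) • xg i⟫ ≤
        2 * γ * Real.sqrt ⟪U (z 0 - zs), z 0 - zs⟫ /
          (∑ i ∈ Finset.range (k + 1), γ * lam i) := by
  -- abbreviations
  set N : H → ℝ := fun x => Real.sqrt ⟪U x, x⟫ with hN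
  have hsym : ∀ x y : H, ⟪U x, y⟫ = ⟪U y, x⟫ := by
    intro x y
    exact (hU.isSymmetric x y).trans (real_inner_comm x (U y)).symm
  have hBnn : ∀ x : H, (0:ℝ) ≤ ⟪U x, x⟫ := fun x =>
    le_trans (by positivity) (hstrong x)
  have hNsq : ∀ x : H, N x ^ 2 = ⟪U x, x⟫ := fun x => Real.sq_sqrt (hBnn x)
  have hNnn : ∀ x : H, 0 ≤ N x := fun x => Real.sqrt_nonneg _
  -- Cauchy-Schwarz for the U-form
  have hCS : ∀ x y : H, ⟪U x, y⟫ ≤ N x * N y := by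
    intro x y
    by_cases hy : y = 0
    · simp only [hy, inner_zero_right]
      exact mul_nonneg (hNnn x) (hNnn 0)
    · have hyy : (0:ℝ) < ⟪U y, y⟫ := by
        have h1 : 0 < ρ * ‖y‖ ^ 2 := mul_pos hρ (pow_pos (norm_pos_iff.mpr hy) 2)
        exact lt_of_lt_of_le h1 (hstrong y)
      have h0 : (0:ℝ) ≤ ⟪U (⟪U y, y⟫ • x - ⟪U x, y⟫ • y),
          ⟪U y, y⟫ • x - ⟪U x, y⟫ • y⟫ := hBnn _
      have hexp : ⟪U (⟪U y, y⟫ • x - ⟪U x, y⟫ • y), ⟪U y, y⟫ • x - ⟪U x, y⟫ • y⟫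
          = ⟪U y, y⟫ ^ 2 * ⟪U x, x⟫ - ⟪U y, y⟫ * ⟪U x, y⟫ ^ 2 := by
        simp only [map_sub, map_smul, inner_sub_left, inner_sub_right,
          real_inner_smul_left, real_inner_smul_right,
          ContinuousLinearMap.coe_smul', Pi.smul_apply, smul_eq_mul]
        rw [hsym y x]
        ring
      have hsq : ⟪U x, y⟫ ^ 2 ≤ ⟪U x, x⟫ * ⟪U y, y⟫ := by
        rw [hexp] at h0
        nlinarith [h0, hyy]
      calc ⟪U x, y⟫ ≤ |⟪U x, y⟫| := le_abs_self _
        _ = Real.sqrt (⟪U x, y⟫ ^ 2) := (Real.sqrt_sq_eq_abs _).symm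
        _ ≤ Real.sqrt (⟪U x, x⟫ * ⟪U y, y⟫) := Real.sqrt_le_sqrt hsq
        _ = N x * N y := Real.sqrt_mul (hBnn x) _
  -- triangle inequality
  have htri : ∀ x y : H, N (x + y) ≤ N x + N y := by
    intro x y
    have h1 : ⟪U (x + y), x + y⟫ ≤ (N x + N y) ^ 2 := by
      have hexp : ⟪U (x + y), x + y⟫
          = ⟪U x, x⟫ + 2 * ⟪U x, y⟫ + ⟪U y, y⟫ := by
        simp only [map_add, inner_add_left, inner_add_right]
        rw [hsym y x]; ring
      nlinarith [hCS x y, hNsq x, hNsq y]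
    calc N (x + y) ≤ Real.sqrt ((N x + N y) ^ 2) := Real.sqrt_le_sqrt h1
      _ = |N x + N y| := Real.sqrt_sq_eq_abs _
      _ = N x + N y := abs_of_nonneg (by positivity)
  -- scaling
  have hsc : ∀ (c : ℝ) (x : H), N (c • x) = |c| * N x := by
    intro c x
    have hexp : ⟪U (c • x), c • x⟫ = c ^ 2 * ⟪U x, x⟫ := by
      simp only [map_smul, real_inner_smul_left, real_inner_smul_right,
        ContinuousLinearMap.coe_smul', Pi.smul_apply, smul_eq_mul]
      ring
    show Real.sqrt _ = _
    rw [hexp, Real.sqrt_mul (sq_nonneg c), Real.sqrt_sq_eq_abs]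
  have hneg : ∀ x : H, N (-x) = N x := by
    intro x
    have := hsc (-1) x
    simpa using this
  -- Fejér monotonicity
  have hfej1 : ∀ i : ℕ, N (z (i + 1) - zs) ≤ N (z i - zs) := by
    intro i
    obtain ⟨hl0, hl2⟩ := hlam i
    have hTcontr : N (T (z i) - zs) ≤ N (z i - zs) := by
      have := hT (z i) zs
      rw [hfix] at this
      exact Real.sqrt_le_sqrt this
    have hdec : z (i + 1) - zs
        = (1 - lam i / 2) • (z i - zs) + (lam i / 2) • (T (z i) - zs) := by
      rw [hrec i]; module
    calc N (z (i + 1) - zs)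
        ≤ N ((1 - lam i / 2) • (z i - zs)) + N ((lam i / 2) • (T (z i) - zs)) := by
          rw [hdec]; exact htri _ _
      _ = (1 - lam i / 2) * N (z i - zs) + (lam i / 2) * N (T (z i) - zs) := by
          rw [hsc, hsc, abs_of_nonneg (by linarith), abs_of_nonneg (by linarith)]
      _ ≤ (1 - lam i / 2) * N (z i - zs) + (lam i / 2) * N (z i - zs) := by
          have h2 : 0 ≤ lam i / 2 := by linarith
          nlinarith [hTcontr]
      _ = N (z i - zs) := by ring
  have hfej : ∀ k : ℕ, N (z k - zs) ≤ N (z 0 - zs) := by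
    intro k
    induction k with
    | zero => exact le_refl _
    | succ n ih => exact le_trans (hfej1 n) ih
  -- telescoping sum
  have htel : ∀ k : ℕ,
      ∑ i ∈ Finset.range (k + 1), (γ * lam i) • (xf i - xg i)
        = γ • (z (k + 1) - z 0) := by
    intro k
    induction k with
    | zero =>
        simp only [zero_add, Finset.range_one, Finset.sum_singleton]
        rw [mul_smul, hfpr 0]
    | succ n ih =>
        rw [Finset.sum_range_succ, ih, mul_smul, hfpr (n + 1), ← smul_add]
        congr 1
        abel
  intro k
  set S : ℝ := ∑ i ∈ Finset.range (k + 1), γ * lam i with hS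
  have hSpos : 0 < S := by
    apply Finset.sum_pos
    · intro i _
      exact mul_pos hγ (hlam i).1
    · exact Finset.nonempty_range_iff.mpr (Nat.succ_ne_zero k)
  have hv : S⁻¹ • (∑ i ∈ Finset.range (k + 1), (γ * lam i) • xf i)
      - S⁻¹ • (∑ i ∈ Finset.range (k + 1), (γ * lam i) • xg i)
      = (S⁻¹ * γ) • (z (k + 1) - z 0) := by
    rw [← smul_sub, ← Finset.sum_sub_distrib]
    rw [mul_smul]
    congr 1
    rw [← htel k]
    congr 1
    ext i
    rw [smul_sub]
  show Real.sqrt _ ≤ _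
  rw [hv]
  have hstep : N ((S⁻¹ * γ) • (z (k + 1) - z 0)) ≤ S⁻¹ * γ * (2 * N (z 0 - zs)) := by
    rw [hsc, abs_of_nonneg (by positivity)]
    have hbd : N (z (k + 1) - z 0) ≤ 2 * N (z 0 - zs) := by
      have hdec : z (k + 1) - z 0 = (z (k + 1) - zs) + (zs - z 0) := by abel
      calc N (z (k + 1) - z 0) ≤ N (z (k + 1) - zs) + N (zs - z 0) := by
            rw [hdec]; exact htri _ _
        _ ≤ N (z 0 - zs) + N (z 0 - zs) := by
            have h2 : N (zs - z 0) = N (z 0 - zs) := by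
              rw [← hneg (z 0 - zs)]; congr 1; abel
            rw [h2]
            exact add_le_add (hfej (k + 1)) (le_refl _)
        _ = 2 * N (z 0 - zs) := by ring
    have hpos : 0 ≤ S⁻¹ * γ := by positivity
    exact mul_le_mul_of_nonneg_left hbd hpos
  calc Real.sqrt ⟪U ((S⁻¹ * γ) • (z (k + 1) - z 0)), (S⁻¹ * γ) • (z (k + 1) - z 0)⟫
      = N ((S⁻¹ * γ) • (z (k + 1) - z 0)) := rfl
    _ ≤ S⁻¹ * γ * (2 * N (z 0 - zs)) := hstep
    _ = 2 * γ * Real.sqrt ⟪U (z 0 - zs), z 0 - zs⟫ / S := by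
        rw [div_eq_mul_inv]; ring
end

section
/- (Strong monotonicity of the first metric class, level 1) Let H₀ and G be real Hilbert spaces, V₀ : H₀ → H₀ and V : G → G self-adjoint bounded with V₀ ⪰ μ₀I, V ⪰ μI (μ₀, μ > 0), B : H₀ → G bounded linear, and w ∈ ℝ with w²‖V^{−1/2} B V₀^{−1/2}‖² < 1. Define U_w(x, y) := (V₀x − wB*y, −wBx + Vy) on H₀ × G. Then U_w is self-adjoint and ⟨(x,y), U_w(x,y)⟩ ≥ (1/2)(1 − w²‖V^{−1/2}BV₀^{−1/2}‖²) min{μ₀, μ}(‖x‖² + ‖y‖²) for all (x,y). -/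
open RealInnerProductSpace

set_option maxHeartbeats 800000

/-- Strong monotonicity of the first metric class (level 1):
`U_w(x,y) = (V₀x - wB*y, -wBx + Vy)` is self-adjoint and strongly monotone whenever
`w²‖V^{-1/2} B V₀^{-1/2}‖² < 1`. -/
theorem first_metric_class_strongly_monotone
    {H₀ G : Type*} [NormedAddCommGroup H₀] [InnerProductSpace ℝ H₀] [CompleteSpace H₀]
    [NormedAddCommGroup G] [InnerProductSpace ℝ G] [CompleteSpace G]
    (μ₀ μ : ℝ) (hμ₀ : 0 < μ₀) (hμ : 0 < μ)
    (V₀ : H₀ →L[ℝ] H₀) (hV₀ : IsSelfAdjoint V₀)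
    (hV₀μ : ∀ x : H₀, μ₀ * ‖x‖ ^ 2 ≤ ⟪V₀ x, x⟫)
    (V : G →L[ℝ] G) (hV : IsSelfAdjoint V)
    (hVμ : ∀ y : G, μ * ‖y‖ ^ 2 ≤ ⟪V y, y⟫)
    (B : H₀ →L[ℝ] G) (w : ℝ)
    -- `Q₀ = V₀^{-1/2}` and `Q = V^{-1/2}`: the inverses of the positive square roots
    (Q₀ : H₀ →L[ℝ] H₀) (hQ₀sa : IsSelfAdjoint Q₀) (hQ₀pos : ∀ x : H₀, 0 ≤ ⟪Q₀ x, x⟫)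
    (hQ₀inv₁ : V₀ ∘L (Q₀ ∘L Q₀) = ContinuousLinearMap.id ℝ H₀)
    (hQ₀inv₂ : (Q₀ ∘L Q₀) ∘L V₀ = ContinuousLinearMap.id ℝ H₀)
    (Q : G →L[ℝ] G) (hQsa : IsSelfAdjoint Q) (hQpos : ∀ y : G, 0 ≤ ⟪Q y, y⟫)
    (hQinv₁ : V ∘L (Q ∘L Q) = ContinuousLinearMap.id ℝ G)
    (hQinv₂ : (Q ∘L Q) ∘L V = ContinuousLinearMap.id ℝ G)
    (hw : w ^ 2 * ‖Q ∘L B ∘L Q₀‖ ^ 2 < 1) :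
    -- self-adjointness of `U_w`, stated componentwise on `H₀ × G`
    (∀ x y x' y',
      ⟪V₀ x - w • (ContinuousLinearMap.adjoint B) y, x'⟫ +
        ⟪-(w • B x) + V y, y'⟫ =
      ⟪x, V₀ x' - w • (ContinuousLinearMap.adjoint B) y'⟫ +
        ⟪y, -(w • B x') + V y'⟫) ∧
    -- strong monotonicity of `U_w`
    (∀ x y,
      (1 / 2) * (1 - w ^ 2 * ‖Q ∘L B ∘L Q₀‖ ^ 2) * min μ₀ μ * (‖x‖ ^ 2 + ‖y‖ ^ 2) ≤
        ⟪x, V₀ x - w • (ContinuousLinearMap.adjoint B) y⟫ +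
          ⟪y, -(w • B x) + V y⟫) := by
  have sym₀ : ∀ u v : H₀, ⟪V₀ u, v⟫ = ⟪u, V₀ v⟫ := fun u v =>
    (ContinuousLinearMap.isSelfAdjoint_iff_isSymmetric.mp hV₀) u v
  have symV : ∀ u v : G, ⟪V u, v⟫ = ⟪u, V v⟫ := fun u v =>
    (ContinuousLinearMap.isSelfAdjoint_iff_isSymmetric.mp hV) u v
  have symQ₀ : ∀ u v : H₀, ⟪Q₀ u, v⟫ = ⟪u, Q₀ v⟫ := fun u v =>
    (ContinuousLinearMap.isSelfAdjoint_iff_isSymmetric.mp hQ₀sa) u v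
  have symQ : ∀ u v : G, ⟪Q u, v⟫ = ⟪u, Q v⟫ := fun u v =>
    (ContinuousLinearMap.isSelfAdjoint_iff_isSymmetric.mp hQsa) u v
  constructor
  · intro x y x' y'
    have h1 : ⟪(ContinuousLinearMap.adjoint B) y, x'⟫ = ⟪y, B x'⟫ :=
      ContinuousLinearMap.adjoint_inner_left B x' y
    have h2 : ⟪B x, y'⟫ = ⟪x, (ContinuousLinearMap.adjoint B) y'⟫ :=
      (ContinuousLinearMap.adjoint_inner_right B x y').symm
    simp only [inner_sub_left, inner_sub_right, inner_add_left, inner_add_right,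
      inner_neg_left, inner_neg_right, inner_smul_left, inner_smul_right,
      RCLike.conj_to_real, h1, h2]
    rw [sym₀ x x', symV y y']
    ring
  · intro x y
    set R₀ : H₀ →L[ℝ] H₀ := V₀ ∘L Q₀ with hR₀def
    set R : G →L[ℝ] G := V ∘L Q with hRdef
    have e₀₁ : ∀ z : H₀, V₀ (Q₀ (Q₀ z)) = z := fun z =>
      congrFun (congrArg DFunLike.coe hQ₀inv₁) z
    have e₀₂ : ∀ z : H₀, Q₀ (Q₀ (V₀ z)) = z := fun z =>
      congrFun (congrArg DFunLike.coe hQ₀inv₂) z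
    have e₁ : ∀ z : G, V (Q (Q z)) = z := fun z =>
      congrFun (congrArg DFunLike.coe hQinv₁) z
    have e₂ : ∀ z : G, Q (Q (V z)) = z := fun z =>
      congrFun (congrArg DFunLike.coe hQinv₂) z
    have comm₀ : ∀ z : H₀, V₀ (Q₀ z) = Q₀ (V₀ z) := by
      intro z
      conv_lhs => rw [show z = Q₀ (Q₀ (V₀ z)) from (e₀₂ z).symm]
      rw [e₀₁]
    have comm : ∀ z : G, V (Q z) = Q (V z) := by
      intro z
      conv_lhs => rw [show z = Q (Q (V z)) from (e₂ z).symm]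
      rw [e₁]
    have hR₀sq : ∀ z : H₀, R₀ (R₀ z) = V₀ z := by
      intro z
      simp only [hR₀def, ContinuousLinearMap.comp_apply]
      rw [comm₀ z, e₀₁]
    have hRsq : ∀ z : G, R (R z) = V z := by
      intro z
      simp only [hRdef, ContinuousLinearMap.comp_apply]
      rw [comm z, e₁]
    have hQ₀R₀ : ∀ z : H₀, Q₀ (R₀ z) = z := by
      intro z
      simp only [hR₀def, ContinuousLinearMap.comp_apply]
      rw [comm₀ z, e₀₂]
    have hQR : ∀ z : G, Q (R z) = z := by
      intro z
      simp only [hRdef, ContinuousLinearMap.comp_apply]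
      rw [comm z, e₂]
    have hR₀sym : ∀ u v : H₀, ⟪R₀ u, v⟫ = ⟪u, R₀ v⟫ := by
      intro u v
      simp only [hR₀def, ContinuousLinearMap.comp_apply]
      rw [sym₀ (Q₀ u) v, symQ₀ u (V₀ v), ← comm₀ v]
    have hRsym : ∀ u v : G, ⟪R u, v⟫ = ⟪u, R v⟫ := by
      intro u v
      simp only [hRdef, ContinuousLinearMap.comp_apply]
      rw [symV (Q u) v, symQ u (V v), ← comm v]
    set c : ℝ := ‖Q ∘L B ∘L Q₀‖ with hcdef
    set a : ℝ := ‖R₀ x‖ with hadef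
    set b : ℝ := ‖R y‖ with hbdef
    have normR₀ : a ^ 2 = ⟪x, V₀ x⟫ := by
      rw [hadef, ← real_inner_self_eq_norm_sq, hR₀sym x (R₀ x), hR₀sq x]
    have normR : b ^ 2 = ⟪y, V y⟫ := by
      rw [hbdef, ← real_inner_self_eq_norm_sq, hRsym y (R y), hRsq y]
    have hkey : ⟪B x, y⟫ = ⟪(Q ∘L B ∘L Q₀) (R₀ x), R y⟫ := by
      simp only [ContinuousLinearMap.comp_apply]
      rw [hQ₀R₀ x, symQ (B x) (R y), hQR y]
    have hcross : |⟪B x, y⟫| ≤ c * a * b := by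
      rw [hkey]
      calc |⟪(Q ∘L B ∘L Q₀) (R₀ x), R y⟫| ≤ ‖(Q ∘L B ∘L Q₀) (R₀ x)‖ * ‖R y‖ :=
            abs_real_inner_le_norm _ _
        _ ≤ (c * ‖R₀ x‖) * ‖R y‖ :=
            mul_le_mul_of_nonneg_right ((Q ∘L B ∘L Q₀).le_opNorm (R₀ x)) (norm_nonneg _)
        _ = c * a * b := rfl
    have hc0 : 0 ≤ c := norm_nonneg _
    set d : ℝ := |w| * c with hddef
    have hd0 : 0 ≤ d := mul_nonneg (abs_nonneg _) hc0
    have hdsq : d ^ 2 = w ^ 2 * c ^ 2 := by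
      rw [hddef, mul_pow, sq_abs]
    have hd1 : d < 1 := by nlinarith [hw, hdsq, hd0]
    have hcw : w * ⟪B x, y⟫ ≤ d * (a * b) := by
      calc w * ⟪B x, y⟫ ≤ |w * ⟪B x, y⟫| := le_abs_self _
        _ = |w| * |⟪B x, y⟫| := abs_mul _ _
        _ ≤ |w| * (c * a * b) := mul_le_mul_of_nonneg_left hcross (abs_nonneg _)
        _ = d * (a * b) := by rw [hddef]; ring
    have hBadj : ⟪x, (ContinuousLinearMap.adjoint B) y⟫ = ⟪B x, y⟫ :=
      ContinuousLinearMap.adjoint_inner_right B x y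
    have hBx : ⟪y, B x⟫ = ⟪B x, y⟫ := real_inner_comm _ _
    have hexp : ⟪x, V₀ x - w • (ContinuousLinearMap.adjoint B) y⟫ +
        ⟪y, -(w • B x) + V y⟫ =
        a ^ 2 + b ^ 2 - 2 * (w * ⟪B x, y⟫) := by
      rw [inner_sub_right, inner_add_right, inner_neg_right, inner_smul_right,
        inner_smul_right, hBadj, hBx, ← normR₀, ← normR]
      ring
    rw [hexp]
    have hm0 : 0 < min μ₀ μ := lt_min hμ₀ hμ
    have hax : min μ₀ μ * (‖x‖ ^ 2 + ‖y‖ ^ 2) ≤ a ^ 2 + b ^ 2 := by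
      have h1 : min μ₀ μ * ‖x‖ ^ 2 ≤ μ₀ * ‖x‖ ^ 2 :=
        mul_le_mul_of_nonneg_right (min_le_left _ _) (sq_nonneg _)
      have h2 : min μ₀ μ * ‖y‖ ^ 2 ≤ μ * ‖y‖ ^ 2 :=
        mul_le_mul_of_nonneg_right (min_le_right _ _) (sq_nonneg _)
      have h3 : μ₀ * ‖x‖ ^ 2 ≤ ⟪x, V₀ x⟫ := by
        rw [real_inner_comm]; exact hV₀μ x
      have h4 : μ * ‖y‖ ^ 2 ≤ ⟪y, V y⟫ := by
        rw [real_inner_comm]; exact hVμ y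
      rw [normR₀, normR]
      linarith
    have hsum0 : 0 ≤ a ^ 2 + b ^ 2 := add_nonneg (sq_nonneg a) (sq_nonneg b)
    have hhalf : (0:ℝ) ≤ (1 - d ^ 2) / 2 := by rw [hdsq]; linarith
    have key : (1 - d ^ 2) / 2 * (a ^ 2 + b ^ 2) ≤
        a ^ 2 + b ^ 2 - 2 * (w * ⟪B x, y⟫) := by
      nlinarith [mul_nonneg hd0 (sq_nonneg (a - b)),
        mul_nonneg (mul_nonneg (sub_nonneg.mpr hd1.le) (sub_nonneg.mpr hd1.le)) hsum0,
        hcw]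
    calc (1 / 2) * (1 - w ^ 2 * c ^ 2) * min μ₀ μ * (‖x‖ ^ 2 + ‖y‖ ^ 2)
        = (1 - d ^ 2) / 2 * (min μ₀ μ * (‖x‖ ^ 2 + ‖y‖ ^ 2)) := by rw [hdsq]; ring
      _ ≤ (1 - d ^ 2) / 2 * (a ^ 2 + b ^ 2) := mul_le_mul_of_nonneg_left hax hhalf
      _ ≤ a ^ 2 + b ^ 2 - 2 * (w * ⟪B x, y⟫) := key
end

section
/- (Strong monotonicity of the second metric class) Let V₀ ⪰ μ₀I on H₀ and V ⪰ μI on G be self-adjoint bounded (μ₀, μ > 0), B : H₀ → G bounded linear, and w ∈ ℝ with w²‖V^{−1/2}BV₀^{−1/2}‖² < 1. Define U_w(x,y) := (V₀x, (V − w²BV₀⁻¹B*)y). Then U_w is self-adjoint and ⟨(x,y), U_w(x,y)⟩ ≥ min{μ₀, (1 − w²‖V^{−1/2}BV₀^{−1/2}‖²)μ}(‖x‖² + ‖y‖²). -/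
open RealInnerProductSpace

private lemma sa_inner' {E : Type*} [NormedAddCommGroup E] [InnerProductSpace ℝ E]
    [CompleteSpace E] {A : E →L[ℝ] E} (hA : IsSelfAdjoint A) (a b : E) :
    ⟪A a, b⟫ = ⟪a, A b⟫ := by
  nth_rewrite 2 [← hA.adjoint_eq]
  exact (ContinuousLinearMap.adjoint_inner_right A a b).symm

/-- Strong monotonicity of the second metric class:
`U_w(x,y) = (V₀x, (V - w²BV₀⁻¹B*)y)` is self-adjoint and strongly monotone whenever
`w²‖V^{-1/2} B V₀^{-1/2}‖² < 1`. -/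
theorem second_metric_class_strongly_monotone
    {H₀ G : Type*} [NormedAddCommGroup H₀] [InnerProductSpace ℝ H₀] [CompleteSpace H₀]
    [NormedAddCommGroup G] [InnerProductSpace ℝ G] [CompleteSpace G]
    (μ₀ μ : ℝ) (hμ₀ : 0 < μ₀) (hμ : 0 < μ)
    (V₀ : H₀ →L[ℝ] H₀) (hV₀ : IsSelfAdjoint V₀)
    (hV₀μ : ∀ x : H₀, μ₀ * ‖x‖ ^ 2 ≤ ⟪V₀ x, x⟫)
    (V : G →L[ℝ] G) (hV : IsSelfAdjoint V)
    (hVμ : ∀ y : G, μ * ‖y‖ ^ 2 ≤ ⟪V y, y⟫)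
    (B : H₀ →L[ℝ] G) (w : ℝ)
    -- `W₀ = V₀⁻¹`
    (W₀ : H₀ →L[ℝ] H₀)
    (hW₀inv₁ : V₀ ∘L W₀ = ContinuousLinearMap.id ℝ H₀)
    (hW₀inv₂ : W₀ ∘L V₀ = ContinuousLinearMap.id ℝ H₀)
    -- `Q₀ = V₀^{-1/2}` and `Q = V^{-1/2}`: the inverses of the positive square roots
    (Q₀ : H₀ →L[ℝ] H₀) (hQ₀sa : IsSelfAdjoint Q₀) (hQ₀pos : ∀ x : H₀, 0 ≤ ⟪Q₀ x, x⟫)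
    (hQ₀inv₁ : V₀ ∘L (Q₀ ∘L Q₀) = ContinuousLinearMap.id ℝ H₀)
    (hQ₀inv₂ : (Q₀ ∘L Q₀) ∘L V₀ = ContinuousLinearMap.id ℝ H₀)
    (Q : G →L[ℝ] G) (hQsa : IsSelfAdjoint Q) (hQpos : ∀ y : G, 0 ≤ ⟪Q y, y⟫)
    (hQinv₁ : V ∘L (Q ∘L Q) = ContinuousLinearMap.id ℝ G)
    (hQinv₂ : (Q ∘L Q) ∘L V = ContinuousLinearMap.id ℝ G)
    (hw : w ^ 2 * ‖Q ∘L B ∘L Q₀‖ ^ 2 < 1) :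
    -- self-adjointness of `U_w`, stated componentwise on `H₀ × G`
    (∀ x y x' y',
      ⟪V₀ x, x'⟫ + ⟪V y - w ^ 2 • B (W₀ (ContinuousLinearMap.adjoint B y)), y'⟫ =
      ⟪x, V₀ x'⟫ + ⟪y, V y' - w ^ 2 • B (W₀ (ContinuousLinearMap.adjoint B y'))⟫) ∧
    -- strong monotonicity of `U_w`
    (∀ x y,
      min μ₀ ((1 - w ^ 2 * ‖Q ∘L B ∘L Q₀‖ ^ 2) * μ) * (‖x‖ ^ 2 + ‖y‖ ^ 2) ≤
        ⟪x, V₀ x⟫ + ⟪y, V y - w ^ 2 • B (W₀ (ContinuousLinearMap.adjoint B y))⟫) := by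

  set c : ℝ := ‖Q ∘L B ∘L Q₀‖ with hc
  -- W₀ = Q₀ ∘L Q₀
  have hW : W₀ = Q₀ ∘L Q₀ := by
    calc W₀ = W₀ ∘L (V₀ ∘L (Q₀ ∘L Q₀)) := by rw [hQ₀inv₁, ContinuousLinearMap.comp_id]
    _ = (W₀ ∘L V₀) ∘L (Q₀ ∘L Q₀) := by rw [ContinuousLinearMap.comp_assoc]
    _ = Q₀ ∘L Q₀ := by rw [hW₀inv₂, ContinuousLinearMap.id_comp]
  -- the cross term
  have hT : ∀ y : G, ⟪y, B (W₀ (ContinuousLinearMap.adjoint B y))⟫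
      = ‖Q₀ (ContinuousLinearMap.adjoint B y)‖ ^ 2 := by
    intro y
    rw [hW]
    rw [← ContinuousLinearMap.adjoint_inner_left B]
    simp only [ContinuousLinearMap.coe_comp', Function.comp_apply]
    rw [← sa_inner' hQ₀sa, real_inner_self_eq_norm_sq]
  have hTsymm : ∀ y y' : G, ⟪B (W₀ (ContinuousLinearMap.adjoint B y)), y'⟫
      = ⟪y, B (W₀ (ContinuousLinearMap.adjoint B y'))⟫ := by
    intro y y'
    rw [hW]
    rw [← ContinuousLinearMap.adjoint_inner_right B]
    rw [← ContinuousLinearMap.adjoint_inner_left B]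
    simp only [ContinuousLinearMap.coe_comp', Function.comp_apply]
    rw [sa_inner' hQ₀sa, sa_inner' hQ₀sa]
  constructor
  · intro x y x' y'
    rw [sa_inner' hV₀]
    congr 1
    rw [inner_sub_left, inner_sub_right, sa_inner' hV, real_inner_smul_left,
      real_inner_smul_right, hTsymm]
  · intro x y
    -- Q is injective
    have hQinj : Function.Injective Q := by
      intro a b hab
      have : V (Q (Q a)) = V (Q (Q b)) := by rw [hab]
      have h1 : V (Q (Q a)) = a := congrFun (congrArg DFunLike.coe hQinv₁) a
      have h2 : V (Q (Q b)) = b := congrFun (congrArg DFunLike.coe hQinv₁) b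
      rwa [h1, h2] at this
    -- Q V Q = id pointwise
    have hQVQ : ∀ u : G, Q (V (Q u)) = u := by
      intro u
      apply hQinj
      exact congrFun (congrArg DFunLike.coe hQinv₂) (Q u)
    set z : G := V (Q y) with hz
    have hQz : Q z = y := hQVQ y
    have hyV : ⟪y, V y⟫ = ‖z‖ ^ 2 := by
      calc ⟪y, V y⟫ = ⟪Q z, V y⟫ := by rw [hQz]
      _ = ⟪z, Q (V y)⟫ := sa_inner' hQsa z (V y)
      _ = ⟪z, z⟫ := by rw [← hQz, hQVQ]
      _ = ‖z‖ ^ 2 := real_inner_self_eq_norm_sq z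
    -- bound ‖Q₀ B* y‖ ≤ c ‖z‖
    have hbound : ‖Q₀ (ContinuousLinearMap.adjoint B y)‖ ≤ c * ‖z‖ := by
      have : Q₀ (ContinuousLinearMap.adjoint B y)
          = (ContinuousLinearMap.adjoint (Q ∘L B ∘L Q₀)) z := by
        rw [← hQz]
        simp [ContinuousLinearMap.adjoint_comp, hQ₀sa.adjoint_eq, hQsa.adjoint_eq]
      rw [this]
      calc ‖(ContinuousLinearMap.adjoint (Q ∘L B ∘L Q₀)) z‖
          ≤ ‖ContinuousLinearMap.adjoint (Q ∘L B ∘L Q₀)‖ * ‖z‖ :=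
            ContinuousLinearMap.le_opNorm _ z
      _ = c * ‖z‖ := by rw [ContinuousLinearMap.adjoint.norm_map]
    have hc0 : 0 ≤ c := norm_nonneg _
    have hz0 : 0 ≤ ‖z‖ := norm_nonneg _
    have hbound2 : ‖Q₀ (ContinuousLinearMap.adjoint B y)‖ ^ 2 ≤ c ^ 2 * ‖z‖ ^ 2 := by
      rw [← mul_pow]
      exact pow_le_pow_left₀ (norm_nonneg _) hbound 2
    have hpos1 : 0 < 1 - w ^ 2 * c ^ 2 := by linarith
    -- second component lower bound
    have hY : (1 - w ^ 2 * c ^ 2) * (μ * ‖y‖ ^ 2)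
        ≤ ⟪y, V y - w ^ 2 • B (W₀ (ContinuousLinearMap.adjoint B y))⟫ := by
      rw [inner_sub_right, real_inner_smul_right, hT, hyV]
      have hw2 : (0:ℝ) ≤ w ^ 2 := sq_nonneg w
      have h1 : w ^ 2 * ‖Q₀ (ContinuousLinearMap.adjoint B y)‖ ^ 2
          ≤ w ^ 2 * (c ^ 2 * ‖z‖ ^ 2) := by
        exact mul_le_mul_of_nonneg_left hbound2 hw2
      have h2 : μ * ‖y‖ ^ 2 ≤ ‖z‖ ^ 2 := by
        rw [← hyV]
        rw [real_inner_comm]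
        exact hVμ y
      nlinarith [mul_le_mul_of_nonneg_left h2 (le_of_lt hpos1)]
    have hX : μ₀ * ‖x‖ ^ 2 ≤ ⟪x, V₀ x⟫ := by
      rw [real_inner_comm]; exact hV₀μ x
    have hmin1 : min μ₀ ((1 - w ^ 2 * c ^ 2) * μ) ≤ μ₀ := min_le_left _ _
    have hmin2 : min μ₀ ((1 - w ^ 2 * c ^ 2) * μ) ≤ (1 - w ^ 2 * c ^ 2) * μ :=
      min_le_right _ _
    have hx2 : (0:ℝ) ≤ ‖x‖ ^ 2 := sq_nonneg _
    have hy2 : (0:ℝ) ≤ ‖y‖ ^ 2 := sq_nonneg _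
    nlinarith [hX, hY, mul_le_mul_of_nonneg_right hmin1 hx2,
      mul_le_mul_of_nonneg_right hmin2 hy2]
end
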